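/- Substitution holds for the usage type system: let Γ and Δ be contexts such that the pointwise parallel composition Γ | Δ is defined. Then (1) if φ; Φ; Γ, v : T ⊢ e' : T' and Δ ⊢ e : T, then φ; Φ; Γ | Δ ⊢ e'[e/v] : T'; and (2) if φ; Φ; Γ, v : T ⊢ P ◁ K and Δ ⊢ e : T, then φ; Φ; Γ | Δ ⊢ P[e/v] ◁ K. -/

import Mathlib

namespace PiSpan

/-! ### Indices: integer expressions over index variables, with `∞` -/

abbrev IVar := ℕ

/-- Indices, built from index variables, function symbols (constants, addition,
multiplication, truncated subtraction, max, min) and `∞`. -/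
inductive Idx : Type where
  | var : IVar → Idx
  | const : ℕ → Idx
  | add : Idx → Idx → Idx
  | mul : Idx → Idx → Idx
  | sub : Idx → Idx → Idx
  | imax : Idx → Idx → Idx
  | imin : Idx → Idx → Idx
  | inf : Idx
  deriving DecidableEq

/-- Valuations of index variables. -/
abbrev Val := IVar → ℕ

/-- Interpretation of an index in `ℕ∞` under a valuation. -/
noncomputable def Idx.eval (ρ : Val) : Idx → ℕ∞
  | .var i => (ρ i : ℕ∞)
  | .const n => (n : ℕ∞)
  | .add I J => I.eval ρ + J.eval ρ
  | .mul I J => I.eval ρ * J.eval ρ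
  | .sub I J => I.eval ρ - J.eval ρ
  | .imax I J => max (I.eval ρ) (J.eval ρ)
  | .imin I J => min (I.eval ρ) (J.eval ρ)
  | .inf => ⊤

/-- Free index variables of an index. -/
def Idx.fv : Idx → Finset IVar
  | .var i => {i}
  | .const _ => ∅
  | .add I J => I.fv ∪ J.fv
  | .mul I J => I.fv ∪ J.fv
  | .sub I J => I.fv ∪ J.fv
  | .imax I J => I.fv ∪ J.fv
  | .imin I J => I.fv ∪ J.fv
  | .inf => ∅

/-- Substitution of the index `J` for the index variable `i`. -/
def Idx.subst : Idx → IVar → Idx → Idx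
  | .var x, i, J => if x = i then J else .var x
  | .const n, _, _ => .const n
  | .add a b, i, J => .add (a.subst i J) (b.subst i J)
  | .mul a b, i, J => .mul (a.subst i J) (b.subst i J)
  | .sub a b, i, J => .sub (a.subst i J) (b.subst i J)
  | .imax a b, i, J => .imax (a.subst i J) (b.subst i J)
  | .imin a b, i, J => .imin (a.subst i J) (b.subst i J)
  | .inf, _, _ => .inf

/-- A constraint `I ⋈ J` between two indices, for a binary relation `⋈` on `ℕ∞`. -/
structure Constraint where
  lhs : Idx
  rel : ℕ∞ → ℕ∞ → Prop
  rhs : Idx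

/-- Satisfaction of a constraint by a valuation. -/
def Constraint.sat (ρ : Val) (C : Constraint) : Prop :=
  C.rel (C.lhs.eval ρ) (C.rhs.eval ρ)

def Constraint.fv (C : Constraint) : Finset IVar := C.lhs.fv ∪ C.rhs.fv

def Constraint.subst (C : Constraint) (i : IVar) (J : Idx) : Constraint :=
  ⟨C.lhs.subst i J, C.rel, C.rhs.subst i J⟩

/-- A (finite) set of constraints. -/
abbrev CSet := List Constraint

def satAll (ρ : Val) (Φ : CSet) : Prop := ∀ C ∈ Φ, C.sat ρ

/-- `entails φ Φ C` : every valuation satisfying `Φ` satisfies `C`. -/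
def entails (_φ : Finset IVar) (Φ : CSet) (C : Constraint) : Prop :=
  ∀ ρ : Val, satAll ρ Φ → C.sat ρ

/-- Semantic comparison of indices under the constraints `Φ`. -/
def semLe (_φ : Finset IVar) (Φ : CSet) (I J : Idx) : Prop :=
  ∀ ρ : Val, satAll ρ Φ → I.eval ρ ≤ J.eval ρ

/-- Intervals `[I, J]` of indices. -/
structure Interval where
  lo : Idx
  hi : Idx
  deriving DecidableEq

def Interval.subst (A : Interval) (i : IVar) (J : Idx) : Interval :=
  ⟨A.lo.subst i J, A.hi.subst i J⟩

/-- `semIncl φ Φ A B` : the interval `A` is included in `B`, under every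
valuation satisfying `Φ`. -/
def semIncl (_φ : Finset IVar) (Φ : CSet) (A B : Interval) : Prop :=
  ∀ ρ : Val, satAll ρ Φ → B.lo.eval ρ ≤ A.lo.eval ρ ∧ A.hi.eval ρ ≤ B.hi.eval ρ

/-- Semantic equality of intervals under the constraints `Φ`. -/
def semEqI (_φ : Finset IVar) (Φ : CSet) (A B : Interval) : Prop :=
  ∀ ρ : Val, satAll ρ Φ → A.lo.eval ρ = B.lo.eval ρ ∧ A.hi.eval ρ = B.hi.eval ρ

/-- Capacities: either a single index `J` (to be understood as `[-∞, J]`)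
or an interval `[I, J]`. -/
inductive Cap where
  | single : Idx → Cap
  | intv : Idx → Idx → Cap
  deriving DecidableEq

def Cap.subst : Cap → IVar → Idx → Cap
  | .single a, i, J => .single (a.subst i J)
  | .intv a b, i, J => .intv (a.subst i J) (b.subst i J)

/-- `capLe φ Φ c d` : inclusion of capacities, a single index `J` being
understood as the interval `[-∞, J]`. -/
def capLe (φ : Finset IVar) (Φ : CSet) : Cap → Cap → Prop
  | .single I, .single J => semLe φ Φ I J
  | .single _, .intv _ _ => False
  | .intv _ J, .single J' => semLe φ Φ J J'
  | .intv I J, .intv I' J' => semLe φ Φ I' I ∧ semLe φ Φ J J'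

/-- Componentwise sum of intervals: `[I,J] + [I',J'] = [I+I', J+J']`. -/
def Interval.add (A B : Interval) : Interval := ⟨A.lo.add B.lo, A.hi.add B.hi⟩

/-- Sum of an interval and a capacity: `[I,J] + J' = [I, J+J']` (single index)
and componentwise sum for an interval capacity. -/
def Interval.addCap (A : Interval) : Cap → Interval
  | .single J => ⟨A.lo, A.hi.add J⟩
  | .intv I J => ⟨A.lo.add I, A.hi.add J⟩

/-- The operation `⊞`: `A ⊞ J = [0, lo(A)+J]` and `A ⊞ [I,J] = [hi(A)+I, lo(A)+J]`. -/
def Interval.boxPlus (A : Interval) : Cap → Interval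
  | .single J => ⟨.const 0, A.lo.add J⟩
  | .intv I J => ⟨A.hi.add I, A.lo.add J⟩

/-- The join `[I,J] ⊔ [I',J'] = [max(I,I'), max(J,J')]`. -/
def Interval.join (A B : Interval) : Interval := ⟨A.lo.imax B.lo, A.hi.imax B.hi⟩

def zeroI : Interval := ⟨.const 0, .const 0⟩
def oneI : Interval := ⟨.const 1, .const 1⟩
def constI (n : ℕ) : Interval := ⟨.const n, .const n⟩

/-! ### Usages -/

/-- Usages: CCS-like processes on a single channel, where each action carries
an obligation interval and a capacity. -/
inductive Usage where
  | nil : Usage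
  | par : Usage → Usage → Usage
  | inp : Interval → Cap → Usage → Usage
  | out : Interval → Cap → Usage → Usage
  | bang : Usage → Usage
  | choice : Usage → Usage → Usage
  deriving DecidableEq

/-- Delaying `↑^{A}U` : adds `A` to the obligation of every top-level action. -/
def Usage.delay (A : Interval) : Usage → Usage
  | .nil => .nil
  | .par U V => .par (U.delay A) (V.delay A)
  | .inp B c U => .inp (A.add B) c U
  | .out B c U => .out (A.add B) c U
  | .bang U => .bang (U.delay A)
  | .choice U V => .choice (U.delay A) (V.delay A)

/-- Delaying by a capacity `↑^{J_c}U`. -/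
def Usage.delayCap (c : Cap) : Usage → Usage
  | .nil => .nil
  | .par U V => .par (U.delayCap c) (V.delayCap c)
  | .inp B d U => .inp (B.addCap c) d U
  | .out B d U => .out (B.addCap c) d U
  | .bang U => .bang (U.delayCap c)
  | .choice U V => .choice (U.delayCap c) (V.delayCap c)

def Usage.subst : Usage → IVar → Idx → Usage
  | .nil, _, _ => .nil
  | .par U V, i, J => .par (U.subst i J) (V.subst i J)
  | .inp B c U, i, J => .inp (B.subst i J) (c.subst i J) (U.subst i J)
  | .out B c U, i, J => .out (B.subst i J) (c.subst i J) (U.subst i J)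
  | .bang U, i, J => .bang (U.subst i J)
  | .choice U V, i, J => .choice (U.subst i J) (V.subst i J)

/-- Congruence on usages. -/
inductive UCongr : Usage → Usage → Prop
  | refl : UCongr U U
  | symm : UCongr U V → UCongr V U
  | trans : UCongr U V → UCongr V W → UCongr U W
  | parNil : UCongr (.par U .nil) U
  | parComm : UCongr (.par U V) (.par V U)
  | parAssoc : UCongr (.par U (.par V W)) (.par (.par U V) W)
  | bangNil : UCongr (.bang .nil) .nil
  | bangUnfold : UCongr (.bang U) (.par (.bang U) U)
  | bangPar : UCongr (.bang (.par U V)) (.par (.bang U) (.bang V))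
  | bangBang : UCongr (.bang (.bang U)) (.bang U)
  | parCtx : UCongr U U' → UCongr V V' → UCongr (.par U V) (.par U' V')
  | inpCtx : UCongr U U' → UCongr (.inp A c U) (.inp A c U')
  | outCtx : UCongr U U' → UCongr (.out A c U) (.out A c U')
  | bangCtx : UCongr U U' → UCongr (.bang U) (.bang U')
  | choiceCtx : UCongr U U' → UCongr V V' → UCongr (.choice U V) (.choice U' V')

/-- Result of a usage reduction step: a usage, or the error `Error`. -/
inductive URes where
  | ok : Usage → URes
  | err : URes

/-- Congruence extended to reduction results. -/
inductive RCongr : URes → URes → Prop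
  | ok : UCongr U V → RCongr (.ok U) (.ok V)
  | err : RCongr .err .err

/-- Side condition for a successful synchronization:
`Φ ⊨ B ⊆ A ⊞ I_c` and `Φ ⊨ A ⊆ B ⊞ J_c`. -/
def goodSync (φ : Finset IVar) (Φ : CSet) (A : Interval) (ic : Cap)
    (B : Interval) (jc : Cap) : Prop :=
  semIncl φ Φ B (A.boxPlus ic) ∧ semIncl φ Φ A (B.boxPlus jc)

/-- Reduction of usages (possibly to `Error`). -/
inductive URed (φ : Finset IVar) (Φ : CSet) : Usage → URes → Prop
  | comm : goodSync φ Φ A ic B jc →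
      URed φ Φ (.par (.inp A ic U) (.out B jc V)) (.ok ((U.par V).delay (A.join B)))
  | commErr : ¬ goodSync φ Φ A ic B jc →
      URed φ Φ (.par (.inp A ic U) (.out B jc V)) .err
  | choiceL : URed φ Φ (.choice U V) (.ok U)
  | choiceR : URed φ Φ (.choice U V) (.ok V)
  | parCtx : URed φ Φ U (.ok U') → URed φ Φ (.par U V) (.ok (.par U' V))
  | parErr : URed φ Φ U .err → URed φ Φ (.par U V) .err
  | congr : UCongr U U' → URed φ Φ U' R' → RCongr R' R → URed φ Φ U R

/-- Multi-step reduction of usages (never going through an error). -/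
def URedStar (φ : Finset IVar) (Φ : CSet) : Usage → Usage → Prop :=
  Relation.ReflTransGen (fun U V => URed φ Φ U (.ok V))

/-- Multi-step reduction towards a result, possibly ending with an error step. -/
def URedStarRes (φ : Finset IVar) (Φ : CSet) (U : Usage) : URes → Prop
  | .ok V => URedStar φ Φ U V
  | .err => ∃ W, URedStar φ Φ U W ∧ URed φ Φ W .err

/-- A usage is reliable when no reduction sequence from it leads to an error. -/
def Reliable (φ : Finset IVar) (Φ : CSet) (U : Usage) : Prop :=
  ∀ V, URedStar φ Φ U V → ¬ URed φ Φ V .err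

/-- The subusage relation. -/
inductive SubU (φ : Finset IVar) (Φ : CSet) : Usage → Usage → Prop
  | toNil : SubU φ Φ U .nil
  | choiceElimL : SubU φ Φ (.choice U V) U
  | choiceElimR : SubU φ Φ (.choice U V) V
  | choiceCtxL : SubU φ Φ U U' → SubU φ Φ (.choice U V) (.choice U' V)
  | choiceCtxR : SubU φ Φ V V' → SubU φ Φ (.choice U V) (.choice U V')
  | parCtx : SubU φ Φ U U' → SubU φ Φ (.par U V) (.par U' V)
  | bangCtx : SubU φ Φ U U' → SubU φ Φ (.bang U) (.bang U')
  | congr : UCongr U U' → SubU φ Φ U' V' → UCongr V' V → SubU φ Φ U V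
  | trans : SubU φ Φ U U' → SubU φ Φ U' U'' → SubU φ Φ U U''
  | inpCtx : SubU φ Φ U U' → SubU φ Φ (.inp A c U) (.inp A c U')
  | outCtx : SubU φ Φ U U' → SubU φ Φ (.out A c U) (.out A c U')
  | inpWeak : semIncl φ Φ B A → capLe φ Φ ic jc → SubU φ Φ (.inp A ic U) (.inp B jc U)
  | outWeak : semIncl φ Φ B A → capLe φ Φ ic jc → SubU φ Φ (.out A ic U) (.out B jc U)
  | inpScope : SubU φ Φ (.par (.inp A jc U) (V.delay (A.addCap jc))) (.inp A jc (.par U V))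
  | outScope : SubU φ Φ (.par (.out A jc U) (V.delay (A.addCap jc))) (.out A jc (.par U V))

/-- Subusage extended to reduction results, with the convention that
`Error ⊑ W` for every usage `W` and the only result below `Error` is `Error`. -/
def SubR (φ : Finset IVar) (Φ : CSet) : URes → URes → Prop
  | .err, _ => True
  | .ok _, .err => False
  | .ok U, .ok V => SubU φ Φ U V

/-! ### The π-calculus with tick -/

/-- Variables / channel names. -/
abbrev Name := ℕ

/-- Expressions: variables, zero, successor. -/
inductive Expr where
  | var : Name → Expr
  | zero : Expr
  | succ : Expr → Expr
  deriving DecidableEq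

/-- Free variables of an expression. -/
def Expr.fv : Expr → Finset Name
  | .var x => {x}
  | .zero => ∅
  | .succ e => e.fv

/-- Substitution of the expression `e` for the variable `v` in an expression. -/
def Expr.subst : Expr → Name → Expr → Expr
  | .var x, v, e => if x = v then e else .var x
  | .zero, _, _ => .zero
  | .succ e', v, e => .succ (e'.subst v e)

/-- Processes of the π-calculus with tick. -/
inductive Proc where
  | nil : Proc
  | par : Proc → Proc → Proc
  | repIn : Name → List Name → Proc → Proc
  | inp : Name → List Name → Proc → Proc
  | out : Name → List Expr → Proc → Proc
  | nu : Name → Proc → Proc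
  | tick : Proc → Proc
  | case : Expr → Proc → Name → Proc → Proc
  deriving DecidableEq

/-- Free names/variables of a process. -/
def Proc.fn : Proc → Finset Name
  | .nil => ∅
  | .par P Q => P.fn ∪ Q.fn
  | .repIn a xs P => insert a (P.fn \ xs.toFinset)
  | .inp a xs P => insert a (P.fn \ xs.toFinset)
  | .out a es P => insert a ((es.foldr (fun e s => e.fv ∪ s) ∅) ∪ P.fn)
  | .nu a P => P.fn \ {a}
  | .tick P => P.fn
  | .case e P x Q => e.fv ∪ P.fn ∪ (Q.fn \ {x})

/-- Substitution in channel-name position: a name is replaced only by a name. -/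
def substName (a : Name) (v : Name) (e : Expr) : Name :=
  if a = v then (match e with | .var b => b | _ => a) else a

/-- Substitution of the expression `e` for the variable `v` in a process. -/
def Proc.subst : Proc → Name → Expr → Proc
  | .nil, _, _ => .nil
  | .par P Q, v, e => .par (P.subst v e) (Q.subst v e)
  | .repIn a xs P, v, e =>
      .repIn (substName a v e) xs (if v ∈ xs then P else P.subst v e)
  | .inp a xs P, v, e =>
      .inp (substName a v e) xs (if v ∈ xs then P else P.subst v e)
  | .out a es P, v, e =>
      .out (substName a v e) (es.map (fun e' => e'.subst v e)) (P.subst v e)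
  | .nu a P, v, e => .nu a (if v = a then P else P.subst v e)
  | .tick P, v, e => .tick (P.subst v e)
  | .case e' P x Q, v, e =>
      .case (e'.subst v e) (P.subst v e) x (if v = x then Q else Q.subst v e)

/-! ### Types with usages and the type system -/

/-- Types: sized integers `Nat[I,J]`, simple channels `Ch(T̄)/U`, and servers
`∀ī.Serv^K(T̄)/U`. -/
inductive Ty where
  | nat : Idx → Idx → Ty
  | ch : List Ty → Usage → Ty
  | serv : List IVar → Interval → List Ty → Usage → Ty

mutual
/-- Index substitution in a type (the bound index variables of a server are
not substituted). -/
def Ty.isubst : Ty → IVar → Idx → Ty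
  | .nat a b, i, J => .nat (a.subst i J) (b.subst i J)
  | .ch Ts U, i, J => .ch (Ty.isubstList Ts i J) (U.subst i J)
  | .serv bs K Ts U, i, J =>
      if i ∈ bs then .serv bs K Ts U
      else .serv bs (K.subst i J) (Ty.isubstList Ts i J) (U.subst i J)

def Ty.isubstList : List Ty → IVar → Idx → List Ty
  | [], _, _ => []
  | T :: Ts, i, J => Ty.isubst T i J :: Ty.isubstList Ts i J
end

/-- Simultaneous index substitution `T[Ī/ī]`, as an iterated substitution. -/
def Ty.misubst (T : Ty) (ps : List (IVar × Idx)) : Ty :=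
  ps.foldl (fun T p => T.isubst p.1 p.2) T

/-- Simultaneous index substitution in an interval. -/
def Interval.misubst (K : Interval) (ps : List (IVar × Idx)) : Interval :=
  ps.foldl (fun K p => K.subst p.1 p.2) K

/-- Delaying a type by an interval (acts on the usage of a channel or server). -/
def Ty.delayI (A : Interval) : Ty → Ty
  | .nat I J => .nat I J
  | .ch Ts U => .ch Ts (U.delay A)
  | .serv bs K Ts U => .serv bs K Ts (U.delay A)

/-- Delaying a type by a capacity. -/
def Ty.delayC (c : Cap) : Ty → Ty
  | .nat I J => .nat I J
  | .ch Ts U => .ch Ts (U.delayCap c)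
  | .serv bs K Ts U => .serv bs K Ts (U.delayCap c)

/-- Replication of a type `!T`. -/
def Ty.bangT : Ty → Ty
  | .nat I J => .nat I J
  | .ch Ts U => .ch Ts (.bang U)
  | .serv bs K Ts U => .serv bs K Ts (.bang U)

/-- A type is reliable when it is an integer type, or a channel or server type
with a reliable usage. -/
def ReliableTy (φ : Finset IVar) (Φ : CSet) : Ty → Prop
  | .nat _ _ => True
  | .ch _ U => Reliable φ Φ U
  | .serv _ _ _ U => Reliable φ Φ U

/-- Parallel composition of types (a partial operation, given as a relation). -/
inductive TyPar : Ty → Ty → Ty → Prop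
  | nat : TyPar (.nat I J) (.nat I J) (.nat I J)
  | ch : TyPar (.ch Ts U) (.ch Ts V) (.ch Ts (U.par V))
  | serv : TyPar (.serv bs K Ts U) (.serv bs K Ts V) (.serv bs K Ts (U.par V))

/-- Typing contexts. -/
abbrev Ctx := Name → Option Ty

def Ctx.update (Γ : Ctx) (a : Name) (T : Ty) : Ctx :=
  fun x => if x = a then some T else Γ x

def Ctx.extend (Γ : Ctx) (xs : List Name) (Ts : List Ty) : Ctx :=
  (xs.zip Ts).foldl (fun Δ p => Δ.update p.1 p.2) Γ

def Ctx.tmap (f : Ty → Ty) (Γ : Ctx) : Ctx := fun x => (Γ x).map f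

/-- Pointwise parallel composition of optional types. -/
inductive OptPar : Option Ty → Option Ty → Option Ty → Prop
  | none : OptPar none none none
  | some : TyPar T S R → OptPar (some T) (some S) (some R)

/-- Parallel composition of contexts `Θ = Γ | Δ` (a partial operation,
given as a relation). -/
def CtxPar (Γ Δ Θ : Ctx) : Prop := ∀ x, OptPar (Γ x) (Δ x) (Θ x)

/-- Subtyping. -/
inductive Sub : Finset IVar → CSet → Ty → Ty → Prop
  | nat : semLe φ Φ I' I → semLe φ Φ J J' →
      Sub φ Φ (.nat I J) (.nat I' J')
  | ch : Ts.length = Ts'.length →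
      (∀ p ∈ Ts.zip Ts', Sub φ Φ p.1 p.2) →
      (∀ p ∈ Ts'.zip Ts, Sub φ Φ p.1 p.2) →
      SubU φ Φ U V →
      Sub φ Φ (.ch Ts U) (.ch Ts' V)
  | serv : Ts.length = Ts'.length →
      (∀ p ∈ Ts.zip Ts', Sub (φ ∪ bs.toFinset) Φ p.1 p.2) →
      (∀ p ∈ Ts'.zip Ts, Sub (φ ∪ bs.toFinset) Φ p.1 p.2) →
      semEqI (φ ∪ bs.toFinset) Φ K K' →
      SubU φ Φ U V →
      Sub φ Φ (.serv bs K Ts U) (.serv bs K' Ts' V)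

/-- Pointwise subtyping of optional types. -/
inductive OptSub (φ : Finset IVar) (Φ : CSet) : Option Ty → Option Ty → Prop
  | none : OptSub φ Φ none none
  | some : Sub φ Φ T S → OptSub φ Φ (some T) (some S)

/-- Subtyping of contexts, pointwise. -/
def CtxSub (φ : Finset IVar) (Φ : CSet) (Γ Δ : Ctx) : Prop :=
  ∀ x, OptSub φ Φ (Γ x) (Δ x)

/-- The composition `J_c; K` of a capacity and a complexity interval. -/
def seqComp : Cap → Interval → Interval
  | .single J, K => ⟨.const 0, J.add K.hi⟩
  | .intv .inf _, _ => ⟨.const 0, .const 0⟩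
  | .intv _ J, K => ⟨.const 0, J.add K.hi⟩

/-- Typing judgment for expressions `φ; Φ; Γ ⊢ e : T`. -/
inductive ETy : Finset IVar → CSet → Ctx → Expr → Ty → Prop
  | var : Γ x = some T → ETy φ Φ Γ (.var x) T
  | zero : ETy φ Φ Γ .zero (.nat (.const 0) (.const 0))
  | succ : ETy φ Φ Γ e (.nat I J) →
      ETy φ Φ Γ (.succ e) (.nat (I.add (.const 1)) (J.add (.const 1)))
  | sub : ETy φ Φ Δ e T' → CtxSub φ Φ Γ Δ → Sub φ Φ T' T → ETy φ Φ Γ e T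

/-- Typing judgment for processes `φ; Φ; Γ ⊢ P ◁ K`, where the interval `K`
bounds the parallel complexity of `P`. -/
inductive PTy : Finset IVar → CSet → Ctx → Proc → Interval → Prop
  | zero {φ : Finset IVar} {Φ : CSet} {Γ : Ctx} :
      PTy φ Φ Γ .nil zeroI
  | par {φ : Finset IVar} {Φ : CSet} {Γ Δ Θ : Ctx} {P Q : Proc} {K₁ K₂ : Interval} :
      PTy φ Φ Γ P K₁ → PTy φ Φ Δ Q K₂ → CtxPar Γ Δ Θ →
      PTy φ Φ Θ (.par P Q) (K₁.join K₂)
  | tick {φ : Finset IVar} {Φ : CSet} {Γ : Ctx} {P : Proc} {K : Interval} :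
      PTy φ Φ Γ P K →
      PTy φ Φ (Γ.tmap (Ty.delayI oneI)) (.tick P) (K.add oneI)
  | ich {φ : Finset IVar} {Φ : CSet} {Γ : Ctx} {a : Name} {xs : List Name}
      {Ts : List Ty} {U : Usage} {jc : Cap} {P : Proc} {K : Interval} :
      Γ a = none → (∀ x ∈ xs, Γ x = none) → a ∉ xs → xs.Nodup →
      xs.length = Ts.length →
      PTy φ Φ ((Γ.update a (.ch Ts U)).extend xs Ts) P K →
      PTy φ Φ ((Γ.tmap (Ty.delayC jc)).update a (.ch Ts (.inp zeroI jc U)))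
        (.inp a xs P) (seqComp jc K)
  | iserv {φ : Finset IVar} {Φ : CSet} {Γ : Ctx} {a : Name} {xs : List Name}
      {bs : List IVar} {Ts : List Ty} {U : Usage} {jc : Cap} {P : Proc}
      {K : Interval} :
      Γ a = none → (∀ x ∈ xs, Γ x = none) → a ∉ xs → xs.Nodup →
      xs.length = Ts.length →
      PTy (φ ∪ bs.toFinset) Φ ((Γ.update a (.serv bs K Ts U)).extend xs Ts) P K →
      PTy φ Φ (((Γ.tmap Ty.bangT).tmap (Ty.delayC jc)).update a
          (.serv bs K Ts (.bang (.inp zeroI jc U))))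
        (.repIn a xs P) zeroI
  | och {φ : Finset IVar} {Φ : CSet} {Γ Γ' Θ : Ctx} {a : Name} {es : List Expr}
      {Ts : List Ty} {U V : Usage} {jc : Cap} {P : Proc} {K : Interval} :
      Γ a = none → Γ' a = none →
      es.length = Ts.length →
      (∀ p ∈ es.zip Ts, ETy φ Φ (Γ'.update a (.ch Ts V)) p.1 p.2) →
      PTy φ Φ (Γ.update a (.ch Ts U)) P K →
      CtxPar Γ Γ' Θ →
      PTy φ Φ ((Θ.tmap (Ty.delayC jc)).update a (.ch Ts (.out zeroI jc (V.par U))))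
        (.out a es P) (seqComp jc K)
  | oserv {φ : Finset IVar} {Φ : CSet} {Γ Γ' Θ : Ctx} {a : Name} {es : List Expr}
      {bs : List IVar} {Is : List Idx} {Ts : List Ty} {U V : Usage} {jc : Cap}
      {P : Proc} {K K' : Interval} :
      Γ a = none → Γ' a = none →
      es.length = Ts.length → bs.length = Is.length →
      (∀ p ∈ es.zip (Ts.map (fun T => T.misubst (bs.zip Is))),
          ETy φ Φ (Γ'.update a (.serv bs K Ts V)) p.1 p.2) →
      PTy φ Φ (Γ.update a (.serv bs K Ts U)) P K' →
      CtxPar Γ Γ' Θ →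
      PTy φ Φ ((Θ.tmap (Ty.delayC jc)).update a
          (.serv bs K Ts (.out zeroI jc (V.par U))))
        (.out a es P) (seqComp jc (K'.join (K.misubst (bs.zip Is))))
  | case {φ : Finset IVar} {Φ : CSet} {Γ : Ctx} {e : Expr} {I J : Idx}
      {P Q : Proc} {x : Name} {K : Interval} :
      ETy φ Φ Γ e (.nat I J) →
      PTy φ (⟨I, (· ≤ ·), .const 0⟩ :: Φ) Γ P K →
      Γ x = none →
      PTy φ (⟨.const 1, (· ≤ ·), J⟩ :: Φ)
        (Γ.update x (.nat (I.sub (.const 1)) (J.sub (.const 1)))) Q K →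
      PTy φ Φ Γ (.case e P x Q) K
  | nu {φ : Finset IVar} {Φ : CSet} {Γ : Ctx} {a : Name} {T : Ty} {P : Proc}
      {K : Interval} :
      Γ a = none → ReliableTy φ Φ T →
      PTy φ Φ (Γ.update a T) P K → PTy φ Φ Γ (.nu a P) K
  | sub {φ : Finset IVar} {Φ : CSet} {Γ Δ : Ctx} {P : Proc} {K K' : Interval} :
      PTy φ Φ Δ P K → CtxSub φ Φ Γ Δ → semIncl φ Φ K K' → PTy φ Φ Γ P K'

/-! ### Auxiliary development for the substitution theorem -/

/-- `Φ'` is a stronger constraint set than `Φ`. -/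
def Weaker (Φ Φ' : CSet) : Prop := ∀ ρ : Val, satAll ρ Φ' → satAll ρ Φ

theorem Weaker.refl (Φ : CSet) : Weaker Φ Φ := fun _ h => h

theorem Weaker.cons (C : Constraint) (Φ : CSet) : Weaker Φ (C :: Φ) :=
  fun ρ h D hD => h D (List.mem_cons_of_mem _ hD)

theorem semLe_refl {φ Φ} (I : Idx) : semLe φ Φ I I := fun _ _ => le_rfl

theorem semLe_trans {φ Φ} {I J K : Idx} (h1 : semLe φ Φ I J) (h2 : semLe φ Φ J K) :
    semLe φ Φ I K := fun ρ hρ => le_trans (h1 ρ hρ) (h2 ρ hρ)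

theorem semLe_mono {φ Φ Φ'} {I J : Idx} (h : semLe φ Φ I J) (hw : Weaker Φ Φ') :
    semLe φ Φ' I J := fun ρ hρ => h ρ (hw ρ hρ)

theorem semLe_phi {φ φ' Φ} {I J : Idx} (h : semLe φ Φ I J) : semLe φ' Φ I J := h

theorem semIncl_refl {φ Φ} (A : Interval) : semIncl φ Φ A A := fun _ _ => ⟨le_rfl, le_rfl⟩

theorem semIncl_mono {φ Φ Φ'} {A B : Interval} (h : semIncl φ Φ A B) (hw : Weaker Φ Φ') :
    semIncl φ Φ' A B := fun ρ hρ => h ρ (hw ρ hρ)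

theorem semIncl_phi {φ φ' Φ} {A B : Interval} (h : semIncl φ Φ A B) : semIncl φ' Φ A B := h

theorem semEqI_refl {φ Φ} (A : Interval) : semEqI φ Φ A A := fun _ _ => ⟨rfl, rfl⟩

theorem semEqI_symm {φ Φ} {A B : Interval} (h : semEqI φ Φ A B) : semEqI φ Φ B A :=
  fun ρ hρ => ⟨(h ρ hρ).1.symm, (h ρ hρ).2.symm⟩

theorem semEqI_trans {φ Φ} {A B C : Interval} (h1 : semEqI φ Φ A B) (h2 : semEqI φ Φ B C) :
    semEqI φ Φ A C := fun ρ hρ => ⟨(h1 ρ hρ).1.trans (h2 ρ hρ).1, (h1 ρ hρ).2.trans (h2 ρ hρ).2⟩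

theorem semEqI_mono {φ Φ Φ'} {A B : Interval} (h : semEqI φ Φ A B) (hw : Weaker Φ Φ') :
    semEqI φ Φ' A B := fun ρ hρ => h ρ (hw ρ hρ)

theorem semEqI_phi {φ φ' Φ} {A B : Interval} (h : semEqI φ Φ A B) : semEqI φ' Φ A B := h

theorem capLe_refl {φ Φ} (c : Cap) : capLe φ Φ c c := by
  cases c with
  | single J => exact fun _ _ => le_rfl
  | intv I J => exact ⟨fun _ _ => le_rfl, fun _ _ => le_rfl⟩

theorem capLe_mono {φ Φ Φ'} {c d : Cap} (h : capLe φ Φ c d) (hw : Weaker Φ Φ') :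
    capLe φ Φ' c d := by
  cases c <;> cases d <;> simp only [capLe] at h ⊢
  · exact semLe_mono h hw
  · exact semLe_mono h hw
  · exact ⟨semLe_mono h.1 hw, semLe_mono h.2 hw⟩

theorem capLe_phi {φ φ' Φ} {c d : Cap} (h : capLe φ Φ c d) : capLe φ' Φ c d := by
  cases c <;> cases d <;> simp only [capLe] at h ⊢ <;> exact h

/-! ### UCongr and SubU toolkit -/

theorem UCongr.parNil' {U : Usage} : UCongr (.par .nil U) U :=
  UCongr.trans UCongr.parComm UCongr.parNil

theorem subU_refl {φ Φ} : ∀ U : Usage, SubU φ Φ U U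
  | .nil => SubU.toNil
  | .par U V => SubU.parCtx (subU_refl U)
  | .inp A c U => SubU.inpCtx (subU_refl U)
  | .out A c U => SubU.outCtx (subU_refl U)
  | .bang U => SubU.bangCtx (subU_refl U)
  | .choice U V => SubU.choiceCtxL (subU_refl U)

theorem subU_of_congr {φ Φ} {U V : Usage} (h : UCongr U V) : SubU φ Φ U V :=
  SubU.congr h (subU_refl V) UCongr.refl

theorem subU_par_dropL {φ Φ} {U V : Usage} : SubU φ Φ (.par U V) V :=
  SubU.congr UCongr.refl (SubU.parCtx (V := V) SubU.toNil) UCongr.parNil'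

theorem subU_par_dropR {φ Φ} {U V : Usage} : SubU φ Φ (.par U V) U :=
  SubU.congr UCongr.parComm subU_par_dropL UCongr.refl

theorem subU_par_mono {φ Φ} {U U' V V' : Usage} (h1 : SubU φ Φ U U')
    (h2 : SubU φ Φ V V') : SubU φ Φ (.par U V) (.par U' V') :=
  SubU.trans (SubU.parCtx h1)
    (SubU.congr UCongr.parComm (SubU.parCtx h2) UCongr.parComm)

theorem subU_par_monoL {φ Φ} {U U' V : Usage} (h1 : SubU φ Φ U U') :
    SubU φ Φ (.par U V) (.par U' V) := SubU.parCtx h1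

theorem subU_par_monoR {φ Φ} {U V V' : Usage} (h2 : SubU φ Φ V V') :
    SubU φ Φ (.par U V) (.par U V') := subU_par_mono (subU_refl U) h2
theorem UCongr.shuffle {a b c d : Usage} :
    UCongr (.par (.par a b) (.par c d)) (.par (.par a c) (.par b d)) := by
  refine UCongr.trans (UCongr.symm UCongr.parAssoc) ?_
  refine UCongr.trans (UCongr.parCtx UCongr.refl (UCongr.trans UCongr.parAssoc
    (UCongr.trans (UCongr.parCtx UCongr.parComm UCongr.refl)
      (UCongr.symm UCongr.parAssoc)))) ?_
  exact UCongr.parAssoc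

theorem subU_conv {φ φ' Φ Φ'} (hw : Weaker Φ Φ') {U V : Usage} (h : SubU φ Φ U V) :
    SubU φ' Φ' U V := by
  induction h with
  | toNil => exact SubU.toNil
  | choiceElimL => exact SubU.choiceElimL
  | choiceElimR => exact SubU.choiceElimR
  | choiceCtxL _ ih => exact SubU.choiceCtxL ih
  | choiceCtxR _ ih => exact SubU.choiceCtxR ih
  | parCtx _ ih => exact SubU.parCtx ih
  | bangCtx _ ih => exact SubU.bangCtx ih
  | congr h1 _ h3 ih => exact SubU.congr h1 ih h3
  | trans _ _ ih1 ih2 => exact SubU.trans ih1 ih2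
  | inpCtx _ ih => exact SubU.inpCtx ih
  | outCtx _ ih => exact SubU.outCtx ih
  | inpWeak h1 h2 => exact SubU.inpWeak (semIncl_mono h1 hw) (capLe_mono (capLe_phi h2) hw)
  | outWeak h1 h2 => exact SubU.outWeak (semIncl_mono h1 hw) (capLe_mono (capLe_phi h2) hw)
  | inpScope => exact SubU.inpScope
  | outScope => exact SubU.outScope

theorem subU_mono {φ Φ Φ'} (hw : Weaker Φ Φ') {U V : Usage} (h : SubU φ Φ U V) :
    SubU φ Φ' U V := subU_conv hw h

theorem subU_phi {φ φ' Φ} {U V : Usage} (h : SubU φ Φ U V) : SubU φ' Φ U V :=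
  subU_conv (Weaker.refl Φ) h

theorem ucongr_delayCap {c : Cap} {U V : Usage} (h : UCongr U V) :
    UCongr (U.delayCap c) (V.delayCap c) := by
  induction h with
  | refl => exact UCongr.refl
  | symm _ ih => exact UCongr.symm ih
  | trans _ _ ih1 ih2 => exact UCongr.trans ih1 ih2
  | parNil => exact UCongr.parNil
  | parComm => exact UCongr.parComm
  | parAssoc => exact UCongr.parAssoc
  | bangNil => exact UCongr.bangNil
  | bangUnfold => exact UCongr.bangUnfold
  | bangPar => exact UCongr.bangPar
  | bangBang => exact UCongr.bangBang
  | parCtx _ _ ih1 ih2 => exact UCongr.parCtx ih1 ih2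
  | inpCtx h _ => exact UCongr.inpCtx h
  | outCtx h _ => exact UCongr.outCtx h
  | bangCtx _ ih => exact UCongr.bangCtx ih
  | choiceCtx _ _ ih1 ih2 => exact UCongr.choiceCtx ih1 ih2

theorem semIncl_addCap {φ Φ} (c : Cap) (B : Interval) :
    semIncl φ Φ ((Interval.addCap zeroI c).add B) (B.addCap c) := by
  intro ρ _
  cases c with
  | single J =>
      constructor
      · simp [Interval.addCap, Interval.add, zeroI, Idx.eval, Nat.cast_zero, zero_add]
      · simp only [Interval.addCap, Interval.add, zeroI, Idx.eval, Nat.cast_zero, zero_add]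
        exact le_of_eq (add_comm _ _)
  | intv I J =>
      constructor
      · simp [Interval.addCap, Interval.add, zeroI, Idx.eval, Nat.cast_zero, zero_add]
        exact le_of_eq (add_comm _ _)
      · simp only [Interval.addCap, Interval.add, zeroI, Idx.eval, Nat.cast_zero, zero_add]
        exact le_of_eq (add_comm _ _)

theorem subU_delayCap_le_delay {φ Φ} (c : Cap) :
    ∀ U : Usage, SubU φ Φ (U.delayCap c) (U.delay (Interval.addCap zeroI c))
  | .nil => SubU.toNil
  | .par U V => subU_par_mono (subU_delayCap_le_delay c U) (subU_delayCap_le_delay c V)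
  | .inp B d U => SubU.inpWeak (semIncl_addCap c B) (capLe_refl d)
  | .out B d U => SubU.outWeak (semIncl_addCap c B) (capLe_refl d)
  | .bang U => SubU.bangCtx (subU_delayCap_le_delay c U)
  | .choice U V =>
      SubU.trans (SubU.choiceCtxL (subU_delayCap_le_delay c U))
        (SubU.choiceCtxR (subU_delayCap_le_delay c V))

/-- `inp 0 jc U | X.delayCap jc ⊑ inp 0 jc (U | X)`. -/
theorem subU_scope_inp {φ Φ} {X U : Usage} {jc : Cap} :
    SubU φ Φ (.par (.inp zeroI jc U) (X.delayCap jc)) (.inp zeroI jc (.par U X)) :=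
  SubU.trans (subU_par_monoR (subU_delayCap_le_delay jc X)) SubU.inpScope

theorem subU_scope_out {φ Φ} {X U : Usage} {jc : Cap} :
    SubU φ Φ (.par (.out zeroI jc U) (X.delayCap jc)) (.out zeroI jc (.par U X)) :=
  SubU.trans (subU_par_monoR (subU_delayCap_le_delay jc X)) SubU.outScope

/-- `X.delayCap jc | inp 0 jc U ⊑ inp 0 jc (X | U)`. -/
theorem subU_scope_inp' {φ Φ} {X U : Usage} {jc : Cap} :
    SubU φ Φ (.par (X.delayCap jc) (.inp zeroI jc U)) (.inp zeroI jc (.par X U)) :=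
  SubU.congr UCongr.parComm (SubU.trans subU_scope_inp
    (SubU.inpCtx (subU_of_congr UCongr.parComm))) UCongr.refl

theorem subU_scope_out' {φ Φ} {X U : Usage} {jc : Cap} :
    SubU φ Φ (.par (X.delayCap jc) (.out zeroI jc U)) (.out zeroI jc (.par X U)) :=
  SubU.congr UCongr.parComm (SubU.trans subU_scope_out
    (SubU.outCtx (subU_of_congr UCongr.parComm))) UCongr.refl
/-! ### List lemmas -/

theorem mem_zip_self {α : Type _} : ∀ (l : List α) (p : α × α), p ∈ l.zip l →
    p.1 = p.2 ∧ p.1 ∈ l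
  | [], p, hp => by simp [List.zip] at hp
  | a :: l, p, hp => by
      rw [List.zip_cons_cons, List.mem_cons] at hp
      rcases hp with rfl | hp
      · exact ⟨rfl, List.mem_cons_self⟩
      · obtain ⟨h1, h2⟩ := mem_zip_self _ _ hp
        exact ⟨h1, List.mem_cons_of_mem _ h2⟩

theorem zip_exists_mid {α : Type _} : ∀ (l₁ l₂ l₃ : List α), l₁.length = l₂.length →
    ∀ (p : α × α), p ∈ l₁.zip l₃ → ∃ b, ((p.1, b) ∈ l₁.zip l₂ ∧ (b, p.2) ∈ l₂.zip l₃)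
  | [], _, _, _, _, hp => by simp [List.zip] at hp
  | a :: l₁, [], l₃, hlen, p, hp => by simp at hlen
  | a :: l₁, b :: l₂, [], hlen, p, hp => by simp [List.zip] at hp
  | a :: l₁, b :: l₂, c :: l₃, hlen, p, hp => by
      rw [List.zip_cons_cons, List.mem_cons] at hp
      rcases hp with rfl | hp
      · exact ⟨b, by simp [List.zip_cons_cons], by simp [List.zip_cons_cons]⟩
      · obtain ⟨d, hd1, hd2⟩ := zip_exists_mid _ _ _ (by simpa using hlen) _ hp
        exact ⟨d, List.mem_cons_of_mem _ hd1, List.mem_cons_of_mem _ hd2⟩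

theorem mem_zip_map_left {α β : Type _} (f : α → α) : ∀ (l₁ : List α) (l₂ : List β)
    (p : α × β), p ∈ (l₁.map f).zip l₂ → ∃ q, q ∈ l₁.zip l₂ ∧ p = (f q.1, q.2)
  | a :: l₁, b :: l₂, p, hp => by
      rw [List.map_cons, List.zip_cons_cons, List.mem_cons] at hp
      rcases hp with rfl | hp
      · exact ⟨(a, b), by simp [List.zip_cons_cons], rfl⟩
      · obtain ⟨q, hq1, hq2⟩ := mem_zip_map_left f _ _ _ hp
        exact ⟨q, List.mem_cons_of_mem _ hq1, hq2⟩
  | a :: l₁, [], p, hp => by simp [List.zip] at hp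
  | [], l₂, p, hp => by simp [List.zip] at hp

/-! ### Sub toolkit -/

theorem sub_refl {φ Φ} : ∀ T : Ty, Sub φ Φ T T
  | .nat I J => Sub.nat (semLe_refl I) (semLe_refl J)
  | .ch Ts U => by
      refine Sub.ch rfl ?_ ?_ (subU_refl U) <;>
      · intro p hp
        obtain ⟨h1, h2⟩ := mem_zip_self _ _ hp
        have hsz : sizeOf p.1 < sizeOf (Ty.ch Ts U) := by
          have := List.sizeOf_lt_of_mem h2
          simp only [Ty.ch.sizeOf_spec]; omega
        rw [← h1]
        exact sub_refl p.1
  | .serv bs K Ts U => by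
      refine Sub.serv rfl ?_ ?_ (semEqI_refl K) (subU_refl U) <;>
      · intro p hp
        obtain ⟨h1, h2⟩ := mem_zip_self _ _ hp
        have hsz : sizeOf p.1 < sizeOf (Ty.serv bs K Ts U) := by
          have := List.sizeOf_lt_of_mem h2
          simp only [Ty.serv.sizeOf_spec]; omega
        rw [← h1]
        exact sub_refl p.1
termination_by T => sizeOf T

theorem sub_conv' {Φ} : ∀ {φ A B}, Sub φ Φ A B →
    ∀ φ' Φ', Weaker Φ Φ' → Sub φ' Φ' A B := by
  intro φ A B h
  induction h with
  | nat h1 h2 =>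
      intro φ' Φ' hw
      exact Sub.nat (semLe_mono (semLe_phi h1) hw) (semLe_mono (semLe_phi h2) hw)
  | ch len f g u ihf ihg =>
      intro φ' Φ' hw
      exact Sub.ch len (fun p hp => ihf p hp φ' Φ' hw) (fun p hp => ihg p hp φ' Φ' hw)
        (subU_conv hw u)
  | serv len f g k u ihf ihg =>
      intro φ' Φ' hw
      exact Sub.serv len (fun p hp => ihf p hp _ Φ' hw) (fun p hp => ihg p hp _ Φ' hw)
        (semEqI_mono (semEqI_phi k) hw) (subU_conv hw u)

theorem sub_conv {φ φ' Φ Φ'} (hw : Weaker Φ Φ') {A B} (h : Sub φ Φ A B) :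
    Sub φ' Φ' A B := sub_conv' h φ' Φ' hw

theorem sub_mono {φ Φ Φ'} (hw : Weaker Φ Φ') {A B} (h : Sub φ Φ A B) : Sub φ Φ' A B :=
  sub_conv hw h

theorem sub_phi {φ φ' Φ} {A B} (h : Sub φ Φ A B) : Sub φ' Φ A B :=
  sub_conv (Weaker.refl Φ) h

/-- Head constructor of a type. -/
def Ty.head : Ty → ℕ
  | .nat _ _ => 0
  | .ch _ _ => 1
  | .serv _ _ _ _ => 2

theorem sub_head {φ Φ} {A B : Ty} (h : Sub φ Φ A B) : A.head = B.head := by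
  cases h <;> rfl

theorem sub_trans {Φ} : ∀ (B : Ty) {φ} (A C : Ty), Sub φ Φ A B → Sub φ Φ B C →
    Sub φ Φ A C
  | .nat I J, φ, A, C, h1, h2 => by
      cases h1 with | nat a1 a2 =>
      cases h2 with | nat b1 b2 =>
      exact Sub.nat (semLe_trans b1 a1) (semLe_trans a2 b2)
  | .ch Ts' V, φ, A, C, h1, h2 => by
      cases h1 with | ch len1 f1 g1 u1 =>
      cases h2 with | ch len2 f2 g2 u2 =>
      refine Sub.ch (len1.trans len2) ?_ ?_ (SubU.trans u1 u2)
      · intro p hp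
        obtain ⟨b, hb1, hb2⟩ := zip_exists_mid _ _ _ len1 _ hp
        have hbm : b ∈ Ts' := (List.of_mem_zip hb1).2
        have hsz : sizeOf b < sizeOf (Ty.ch Ts' V) := by
          have := List.sizeOf_lt_of_mem hbm
          simp only [Ty.ch.sizeOf_spec]; omega
        exact sub_trans b _ _ (f1 _ hb1) (f2 _ hb2)
      · intro p hp
        obtain ⟨b, hb1, hb2⟩ := zip_exists_mid _ _ _ len2.symm _ hp
        have hbm : b ∈ Ts' := (List.of_mem_zip hb1).2
        have hsz : sizeOf b < sizeOf (Ty.ch Ts' V) := by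
          have := List.sizeOf_lt_of_mem hbm
          simp only [Ty.ch.sizeOf_spec]; omega
        exact sub_trans b _ _ (g2 _ hb1) (g1 _ hb2)
  | .serv bs K' Ts' V, φ, A, C, h1, h2 => by
      cases h1 with | serv len1 f1 g1 k1 u1 =>
      cases h2 with | serv len2 f2 g2 k2 u2 =>
      refine Sub.serv (len1.trans len2) ?_ ?_ (semEqI_trans k1 k2) (SubU.trans u1 u2)
      · intro p hp
        obtain ⟨b, hb1, hb2⟩ := zip_exists_mid _ _ _ len1 _ hp
        have hbm : b ∈ Ts' := (List.of_mem_zip hb1).2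
        have hsz : sizeOf b < sizeOf (Ty.serv bs K' Ts' V) := by
          have := List.sizeOf_lt_of_mem hbm
          simp only [Ty.serv.sizeOf_spec]; omega
        exact sub_trans b _ _ (f1 _ hb1) (f2 _ hb2)
      · intro p hp
        obtain ⟨b, hb1, hb2⟩ := zip_exists_mid _ _ _ len2.symm _ hp
        have hbm : b ∈ Ts' := (List.of_mem_zip hb1).2
        have hsz : sizeOf b < sizeOf (Ty.serv bs K' Ts' V) := by
          have := List.sizeOf_lt_of_mem hbm
          simp only [Ty.serv.sizeOf_spec]; omega
        exact sub_trans b _ _ (g2 _ hb1) (g1 _ hb2)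
termination_by B => sizeOf B
/-! ### Type list equivalence, MOK, context operations -/

def TyEqL (φ : Finset IVar) (Φ : CSet) (Ss Ts : List Ty) : Prop :=
  Ss.length = Ts.length ∧ (∀ p ∈ Ss.zip Ts, Sub φ Φ p.1 p.2) ∧
    (∀ p ∈ Ts.zip Ss, Sub φ Φ p.1 p.2)

theorem tyEqL_refl {φ Φ} (Ts : List Ty) : TyEqL φ Φ Ts Ts :=
  ⟨rfl, fun p hp => by rw [← (mem_zip_self _ _ hp).1]; exact sub_refl p.1,
    fun p hp => by rw [← (mem_zip_self _ _ hp).1]; exact sub_refl p.1⟩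

theorem tyEqL_symm {φ Φ} {Ss Ts} (h : TyEqL φ Φ Ss Ts) : TyEqL φ Φ Ts Ss :=
  ⟨h.1.symm, h.2.2, h.2.1⟩

theorem tyEqL_trans {φ Φ} {Ss Ts Us} (h1 : TyEqL φ Φ Ss Ts) (h2 : TyEqL φ Φ Ts Us) :
    TyEqL φ Φ Ss Us := by
  refine ⟨h1.1.trans h2.1, ?_, ?_⟩
  · intro p hp
    obtain ⟨b, hb1, hb2⟩ := zip_exists_mid _ Ts _ h1.1 _ hp
    exact sub_trans b _ _ (h1.2.1 _ hb1) (h2.2.1 _ hb2)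
  · intro p hp
    obtain ⟨b, hb1, hb2⟩ := zip_exists_mid _ Ts _ h2.1.symm _ hp
    exact sub_trans b _ _ (h2.2.2 _ hb1) (h1.2.2 _ hb2)

theorem tyEqL_conv {φ φ' Φ Φ'} (hw : Weaker Φ Φ') {Ss Ts} (h : TyEqL φ Φ Ss Ts) :
    TyEqL φ' Φ' Ss Ts :=
  ⟨h.1, fun p hp => sub_conv hw (h.2.1 p hp), fun p hp => sub_conv hw (h.2.2 p hp)⟩

theorem sub_ch_of {φ Φ} {Ss Ts U V} (h : TyEqL φ Φ Ss Ts) (hu : SubU φ Φ U V) :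
    Sub φ Φ (.ch Ss U) (.ch Ts V) := Sub.ch h.1 h.2.1 h.2.2 hu

theorem sub_serv_of {φ Φ} {bs K K' Ss Ts U V} (h : TyEqL (φ ∪ bs.toFinset) Φ Ss Ts)
    (hk : semEqI (φ ∪ bs.toFinset) Φ K K') (hu : SubU φ Φ U V) :
    Sub φ Φ (.serv bs K Ss U) (.serv bs K' Ts V) := Sub.serv h.1 h.2.1 h.2.2 hk hu

theorem sub_ch_inv {φ Φ} {Ss Ts U V} (h : Sub φ Φ (.ch Ss U) (.ch Ts V)) :
    TyEqL φ Φ Ss Ts ∧ SubU φ Φ U V := by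
  cases h with | ch len f g u => exact ⟨⟨len, f, g⟩, u⟩

theorem sub_serv_inv {φ Φ} {bs bs' K K' Ss Ts U V}
    (h : Sub φ Φ (.serv bs K Ss U) (.serv bs' K' Ts V)) :
    bs' = bs ∧ TyEqL (φ ∪ bs.toFinset) Φ Ss Ts ∧ semEqI (φ ∪ bs.toFinset) Φ K K' ∧
      SubU φ Φ U V := by
  cases h with | serv len f g k u => exact ⟨rfl, ⟨len, f, g⟩, k, u⟩

/-- Merge compatibility: `R` is a type below the "merge" of `S` (same skeleton)
and `T` (equivalent skeleton). -/
inductive MOK (φ : Finset IVar) (Φ : CSet) : Ty → Ty → Ty → Prop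
  | nat {I J I' J' I₂ J₂ : Idx} : semLe φ Φ I' I → semLe φ Φ J J' →
      MOK φ Φ (.nat I J) (.nat I' J') (.nat I₂ J₂)
  | ch {Ss Ts W W₁ U} : TyEqL φ Φ Ss Ts → SubU φ Φ W (W₁.par U) →
      MOK φ Φ (.ch Ss W) (.ch Ss W₁) (.ch Ts U)
  | serv {bs KR K₁ K₂ Ss Ts W W₁ U} : TyEqL (φ ∪ bs.toFinset) Φ Ss Ts →
      semEqI φ Φ KR K₁ → semEqI φ Φ KR K₂ → SubU φ Φ W (W₁.par U) →
      MOK φ Φ (.serv bs KR Ss W) (.serv bs K₁ Ss W₁) (.serv bs K₂ Ts U)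

theorem mok_conv {φ φ' Φ Φ'} (hw : Weaker Φ Φ') {R S T} (h : MOK φ Φ R S T) :
    MOK φ' Φ' R S T := by
  cases h with
  | nat h1 h2 => exact MOK.nat (semLe_mono (semLe_phi h1) hw) (semLe_mono (semLe_phi h2) hw)
  | ch he hu => exact MOK.ch (tyEqL_conv hw he) (subU_conv hw hu)
  | serv he k1 k2 hu =>
      exact MOK.serv (tyEqL_conv hw he) (semEqI_mono (semEqI_phi k1) hw)
        (semEqI_mono (semEqI_phi k2) hw) (subU_conv hw hu)

theorem mok_sub_L {φ Φ} {R S T} (h : MOK φ Φ R S T) : Sub φ Φ R S := by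
  cases h with
  | nat h1 h2 => exact Sub.nat h1 h2
  | ch he hu => exact sub_ch_of (tyEqL_refl _) (SubU.trans hu subU_par_dropR)
  | serv he k1 k2 hu =>
      exact sub_serv_of (tyEqL_refl _) (semEqI_phi k1) (SubU.trans hu subU_par_dropR)

theorem mok_sub_T {φ Φ} {R S T} (h : MOK φ Φ R S T) (hh : T.head ≠ 0) :
    Sub φ Φ R T := by
  cases h with
  | nat h1 h2 => exact absurd rfl hh
  | ch he hu => exact sub_ch_of he (SubU.trans hu subU_par_dropL)
  | serv he k1 k2 hu => exact sub_serv_of he (semEqI_phi k2) (SubU.trans hu subU_par_dropL)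

theorem mok_head {φ Φ} {R S T} (h : MOK φ Φ R S T) : R.head = T.head := by
  cases h <;> rfl

theorem mok_mono {φ Φ} {R S T S' T'} (h : MOK φ Φ R S T) (hS : Sub φ Φ S S')
    (hT : Sub φ Φ T T') :
    ∃ R', MOK φ Φ R' S' T' ∧ Sub φ Φ R R' ∧ (T.head = 0 → R' = R) := by
  cases h with
  | nat h1 h2 =>
      cases hS with | nat a1 a2 =>
      cases hT with | nat _ _ =>
      exact ⟨_, MOK.nat (semLe_trans a1 h1) (semLe_trans h2 a2), sub_refl _, fun _ => rfl⟩
  | ch he hu =>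
      cases hS with | ch len1 f1 g1 u1 =>
      cases hT with | ch len2 f2 g2 u2 =>
      exact ⟨_, MOK.ch
          (tyEqL_trans (tyEqL_symm ⟨len1, f1, g1⟩) (tyEqL_trans he ⟨len2, f2, g2⟩))
          (subU_refl _),
        sub_ch_of ⟨len1, f1, g1⟩ (SubU.trans hu (subU_par_mono u1 u2)),
        fun h => by simp [Ty.head] at h⟩
  | serv he k1 k2 hu =>
      cases hS with | serv len1 f1 g1 sk1 u1 =>
      cases hT with | serv len2 f2 g2 sk2 u2 =>
      exact ⟨_, MOK.serv
          (tyEqL_trans (tyEqL_symm ⟨len1, f1, g1⟩) (tyEqL_trans he ⟨len2, f2, g2⟩))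
          (semEqI_trans k1 (semEqI_phi sk1)) (semEqI_trans k2 (semEqI_phi sk2))
          (subU_refl _),
        sub_serv_of ⟨len1, f1, g1⟩ (semEqI_refl _) (SubU.trans hu (subU_par_mono u1 u2)),
        fun h => by simp [Ty.head] at h⟩

/-! ### Context operations and lemmas -/

def Ctx.minus (Γ : Ctx) (a : Name) : Ctx := fun x => if x = a then none else Γ x

def Ctx.only (y : Name) (R : Ty) : Ctx := fun x => if x = y then some R else none

@[simp] theorem Ctx.update_apply (Γ : Ctx) (a : Name) (T : Ty) (x : Name) :
    Ctx.update Γ a T x = if x = a then some T else Γ x := rfl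

@[simp] theorem Ctx.minus_apply (Γ : Ctx) (a : Name) (x : Name) :
    Ctx.minus Γ a x = if x = a then none else Γ x := rfl

@[simp] theorem Ctx.only_apply (y : Name) (R : Ty) (x : Name) :
    Ctx.only y R x = if x = y then some R else none := rfl

@[simp] theorem Ctx.tmap_apply (f : Ty → Ty) (Γ : Ctx) (x : Name) :
    Ctx.tmap f Γ x = (Γ x).map f := rfl

theorem foldl_update_congr : ∀ (l : List (Name × Ty)) (Γ Γ' : Ctx) (x : Name),
    Γ x = Γ' x →
    (l.foldl (fun Δ p => Δ.update p.1 p.2) Γ) x =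
      (l.foldl (fun Δ p => Δ.update p.1 p.2) Γ') x
  | [], Γ, Γ', x, h => h
  | p :: l, Γ, Γ', x, h => by
      rw [List.foldl_cons, List.foldl_cons]
      exact foldl_update_congr l _ _ x (by simp [h])

theorem foldl_update_apply_notMem : ∀ (l : List (Name × Ty)) (Γ : Ctx) (x : Name),
    (∀ p ∈ l, p.1 ≠ x) →
    (l.foldl (fun Δ p => Δ.update p.1 p.2) Γ) x = Γ x
  | [], Γ, x, h => rfl
  | p :: l, Γ, x, h => by
      rw [List.foldl_cons,
        foldl_update_apply_notMem l _ x (fun q hq => h q (List.mem_cons_of_mem _ hq))]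
      have := h p (List.mem_cons_self)
      simp [Ctx.update]
      intro he; exact absurd he.symm this

theorem Ctx.extend_apply_notMem {xs : List Name} {Ts : List Ty} (Γ : Ctx) {x : Name}
    (h : x ∉ xs) : Ctx.extend Γ xs Ts x = Γ x := by
  refine foldl_update_apply_notMem _ _ _ ?_
  intro p hp he
  exact h (he ▸ (List.of_mem_zip hp).1)

theorem Ctx.extend_congr_at {xs : List Name} {Ts : List Ty} {Γ Γ' : Ctx} {x : Name}
    (h : Γ x = Γ' x) : Ctx.extend Γ xs Ts x = Ctx.extend Γ' xs Ts x :=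
  foldl_update_congr _ _ _ _ h

theorem Ctx.extend_update_comm {xs : List Name} {Ts : List Ty} {Γ : Ctx} {a : Name}
    {T : Ty} (h : a ∉ xs) :
    Ctx.extend (Γ.update a T) xs Ts = (Ctx.extend Γ xs Ts).update a T := by
  funext x
  by_cases hx : x = a
  · subst hx
    rw [Ctx.extend_apply_notMem _ h]; simp
  · rw [Ctx.update_apply, if_neg hx]
    exact Ctx.extend_congr_at (by simp [hx])

theorem Ctx.extend_minus_comm {xs : List Name} {Ts : List Ty} {Γ : Ctx} {a : Name}
    (h : a ∉ xs) :
    Ctx.extend (Γ.minus a) xs Ts = (Ctx.extend Γ xs Ts).minus a := by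
  funext x
  by_cases hx : x = a
  · subst hx
    rw [Ctx.extend_apply_notMem _ h]; simp
  · rw [Ctx.minus_apply, if_neg hx]
    exact Ctx.extend_congr_at (by simp [hx])

/-! ### OptSub / CtxSub toolkit -/

theorem optSub_refl {φ Φ} (o : Option Ty) : OptSub φ Φ o o := by
  cases o with
  | none => exact OptSub.none
  | some T => exact OptSub.some (sub_refl T)

theorem ctxSub_refl {φ Φ} (Γ : Ctx) : CtxSub φ Φ Γ Γ := fun x => optSub_refl _

theorem optSub_conv {φ φ' Φ Φ'} (hw : Weaker Φ Φ') {o o'} (h : OptSub φ Φ o o') :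
    OptSub φ' Φ' o o' := by
  cases h with
  | none => exact OptSub.none
  | some hs => exact OptSub.some (sub_conv hw hs)

theorem ctxSub_conv {φ φ' Φ Φ'} (hw : Weaker Φ Φ') {Γ Δ} (h : CtxSub φ Φ Γ Δ) :
    CtxSub φ' Φ' Γ Δ := fun x => optSub_conv hw (h x)

theorem ctxSub_update {φ Φ} {Γ Γ' : Ctx} (h : CtxSub φ Φ Γ Γ') {a T T'}
    (hT : Sub φ Φ T T') : CtxSub φ Φ (Γ.update a T) (Γ'.update a T') := by
  intro x
  by_cases hx : x = a <;> simp [hx]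
  · exact OptSub.some hT
  · exact h x

theorem ctxSub_minus {φ Φ} {Γ Γ' : Ctx} (h : CtxSub φ Φ Γ Γ') (a : Name) :
    CtxSub φ Φ (Γ.minus a) (Γ'.minus a) := by
  intro x
  by_cases hx : x = a <;> simp [hx]
  · exact OptSub.none
  · exact h x

theorem ctxSub_extend {φ Φ} {Γ Γ' : Ctx} (h : CtxSub φ Φ Γ Γ') (xs : List Name)
    (Ts : List Ty) : CtxSub φ Φ (Ctx.extend Γ xs Ts) (Ctx.extend Γ' xs Ts) := by
  rw [Ctx.extend, Ctx.extend]
  generalize (xs.zip Ts) = l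
  induction l generalizing Γ Γ' with
  | nil => exact h
  | cons p l ih =>
      rw [List.foldl_cons, List.foldl_cons]
      exact ih (ctxSub_update h (sub_refl _))

theorem pty_cast {φ Φ} {Γ Δ : Ctx} {P K} (h : PTy φ Φ Δ P K) (hs : CtxSub φ Φ Γ Δ) :
    PTy φ Φ Γ P K := PTy.sub h hs (semIncl_refl K)

theorem ety_cast {φ Φ} {Γ Δ : Ctx} {e T} (h : ETy φ Φ Δ e T) (hs : CtxSub φ Φ Γ Δ) :
    ETy φ Φ Γ e T := ETy.sub h hs (sub_refl T)

theorem typar_sub_L {φ Φ} {A B C : Ty} (h : TyPar A B C) : Sub φ Φ C A := by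
  cases h with
  | nat => exact sub_refl _
  | ch => exact sub_ch_of (tyEqL_refl _) subU_par_dropR
  | serv => exact sub_serv_of (tyEqL_refl _) (semEqI_refl _) subU_par_dropR

theorem typar_sub_R {φ Φ} {A B C : Ty} (h : TyPar A B C) : Sub φ Φ C B := by
  cases h with
  | nat => exact sub_refl _
  | ch => exact sub_ch_of (tyEqL_refl _) subU_par_dropL
  | serv => exact sub_serv_of (tyEqL_refl _) (semEqI_refl _) subU_par_dropL
/-! ### ETy toolkit -/

theorem optSub_none_left {φ Φ o} (h : OptSub φ Φ none o) : o = none := by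
  cases h; rfl

theorem optSub_none_right {φ Φ o} (h : OptSub φ Φ o none) : o = none := by
  cases h; rfl

theorem optSub_some_left {φ Φ S o} (h : OptSub φ Φ (some S) o) :
    ∃ S', o = some S' ∧ Sub φ Φ S S' := by
  cases h with | some hs => exact ⟨_, rfl, hs⟩

theorem optSub_some_right {φ Φ S o} (h : OptSub φ Φ o (some S)) :
    ∃ S', o = some S' ∧ Sub φ Φ S' S := by
  cases h with | some hs => exact ⟨_, rfl, hs⟩



theorem ety_conv' {φ Φ Γ e T} (h : ETy φ Φ Γ e T) :
    ∀ φ' Φ', Weaker Φ Φ' → ETy φ' Φ' Γ e T := by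
  induction h with
  | var h => exact fun φ' Φ' hw => ETy.var h
  | zero => exact fun φ' Φ' hw => ETy.zero
  | succ _ ih => exact fun φ' Φ' hw => ETy.succ (ih φ' Φ' hw)
  | sub _ hcs hsub ih =>
      exact fun φ' Φ' hw => ETy.sub (ih φ' Φ' hw) (ctxSub_conv hw hcs) (sub_conv hw hsub)

theorem ety_conv {φ φ' Φ Φ'} (hw : Weaker Φ Φ') {Γ e T} (h : ETy φ Φ Γ e T) :
    ETy φ' Φ' Γ e T := ety_conv' h φ' Φ' hw

theorem ety_weaken {φ Φ Γ e T} (h : ETy φ Φ Γ e T) :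
    ∀ Δ' : Ctx, (∀ x, Γ x = none ∨ Δ' x = Γ x) → ETy φ Φ Δ' e T := by
  induction h with
  | var h =>
      intro Δ' h'
      rcases h' _ with h0 | h0
      · rw [h] at h0; exact absurd h0 (by simp)
      · exact ETy.var (h ▸ h0)
  | zero => exact fun _ _ => ETy.zero
  | succ _ ih => exact fun Δ' h' => ETy.succ (ih Δ' h')
  | @sub φ Φ Δ e T' Γ T h1 hcs hsub ih =>
      intro Δ' h'
      refine ETy.sub (ih (fun x => (Γ x).elim (Δ' x) (fun _ => Δ x)) ?_) ?_ hsub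
      · intro x
        cases hx : Γ x with
        | none =>
            have := hcs x; rw [hx] at this
            exact Or.inl (optSub_none_left this)
        | some S => right; simp [hx]
      · intro x
        cases hx : Γ x with
        | none => simp [hx]; exact optSub_refl _
        | some S =>
            rcases h' x with h0 | h0
            · rw [hx] at h0; exact absurd h0 (by simp)
            · simp [hx]; rw [h0, hx]
              have := hcs x; rw [hx] at this; exact this

theorem ety_fv_some {φ Φ Γ e T} (h : ETy φ Φ Γ e T) :
    ∀ y, y ∈ e.fv → ∃ S, Γ y = some S := by
  induction h with
  | var h =>
      intro y hy
      simp [Expr.fv, Finset.mem_singleton] at hy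
      exact ⟨_, hy ▸ h⟩
  | zero => intro y hy; simp [Expr.fv] at hy
  | succ _ ih => exact fun y hy => ih y hy
  | @sub φ Φ Δ e T' Γ T _ hcs _ ih =>
      intro y hy
      obtain ⟨S, hS⟩ := ih y hy
      have := hcs y; rw [hS] at this
      obtain ⟨S', hS', _⟩ := optSub_some_right this
      exact ⟨S', hS'⟩

theorem ety_var_inv {φ Φ Γ y T} (h : ETy φ Φ Γ (.var y) T) :
    ∃ S, Γ y = some S ∧ Sub φ Φ S T := by
  generalize he : Expr.var y = e at h
  induction h with
  | var h => cases he; exact ⟨_, h, sub_refl _⟩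
  | zero => cases he
  | succ _ _ => cases he
  | @sub φ Φ Δ e T' Γ T _ hcs hsub ih =>
      obtain ⟨S, hS, hsub'⟩ := ih he
      have := hcs y; rw [hS] at this
      obtain ⟨S', hS', h0⟩ := optSub_some_right this
      exact ⟨S', hS', sub_trans _ _ _ h0 (sub_trans _ _ _ hsub' hsub)⟩

theorem ety_head_var {φ Φ Γ e T} (h : ETy φ Φ Γ e T) (hh : T.head ≠ 0) :
    ∃ x, e = .var x := by
  induction h with
  | var _ => exact ⟨_, rfl⟩
  | zero => exact absurd rfl hh
  | succ _ _ => exact absurd rfl hh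
  | sub _ _ hsub ih => exact ih (by rw [sub_head hsub]; exact hh)

theorem ety_fv_nat_or_var {φ Φ Γ e T} (h : ETy φ Φ Γ e T) :
    ∀ y, y ∈ e.fv → ∃ S, Γ y = some S ∧ (e = .var y ∨ S.head = 0) := by
  induction h with
  | var h =>
      intro y hy
      simp [Expr.fv, Finset.mem_singleton] at hy
      subst hy
      exact ⟨_, h, Or.inl rfl⟩
  | zero => intro y hy; simp [Expr.fv] at hy
  | succ h ih =>
      intro y hy
      obtain ⟨S, hS, hor⟩ := ih y hy
      refine ⟨S, hS, Or.inr ?_⟩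
      rcases hor with he | hh
      · subst he
        obtain ⟨S', hS', hsub⟩ := ety_var_inv h
        rw [hS] at hS'; cases hS'
        have := sub_head hsub; simpa [Ty.head] using this
      · exact hh
  | @sub φ Φ Δ e T' Γ T _ hcs _ ih =>
      intro y hy
      obtain ⟨S, hS, hor⟩ := ih y hy
      have := hcs y; rw [hS] at this
      obtain ⟨S', hS', h0⟩ := optSub_some_right this
      refine ⟨S', hS', ?_⟩
      rcases hor with he | hh
      · exact Or.inl he
      · exact Or.inr (by rw [sub_head h0]; exact hh)

theorem ety_restrict_single {φ Φ Γ e T} (h : ETy φ Φ Γ e T) :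
    ∀ y Sy, e.fv ⊆ {y} → Γ y = some Sy → ETy φ Φ (Ctx.only y Sy) e T := by
  induction h with
  | @var Γ T φ Φ x h =>
      intro y Sy hfv hy
      have hx : x = y := by
        have := hfv (Finset.mem_singleton_self x)
        simpa using this
      subst hx
      rw [h] at hy; cases hy
      exact ETy.var (by simp)
  | zero => exact fun _ _ _ _ => ETy.zero
  | succ _ ih => exact fun y Sy hfv hy => ETy.succ (ih y Sy hfv hy)
  | @sub φ Φ Δ e T' Γ T _ hcs hsub ih =>
      intro y Sy hfv hy
      have := hcs y; rw [hy] at this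
      obtain ⟨Sy', hΔ, h0⟩ := optSub_some_left this
      refine ETy.sub (ih y Sy' hfv hΔ) ?_ hsub
      intro x
      by_cases hx : x = y <;> simp [hx]
      · exact OptSub.some h0
      · exact OptSub.none

theorem ety_restrict_empty {φ Φ Γ e T} (h : ETy φ Φ Γ e T) (hfv : e.fv = ∅) :
    ETy φ Φ (fun _ => none) e T := by
  induction h with
  | var h =>
      exfalso
      simp [Expr.fv] at hfv
  | zero => exact ETy.zero
  | succ _ ih => exact ETy.succ (ih hfv)
  | sub _ hcs hsub ih =>
      refine ETy.sub (ih hfv) (fun x => ?_) hsub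
      exact optSub_refl _

theorem expr_fv_subsingleton : ∀ e : Expr, ∃ y, e.fv ⊆ {y}
  | .var x => ⟨x, by simp [Expr.fv]⟩
  | .zero => ⟨0, by simp [Expr.fv]⟩
  | .succ e => expr_fv_subsingleton e

theorem he_of_sub {φ Φ} {R T : Ty} (y : Name) (h : Sub φ Φ R T) :
    ETy φ Φ (Ctx.only y R) (.var y) T :=
  ETy.sub (ETy.var (by simp)) (ctxSub_refl _) h
theorem ety_var_of_fv {φ Φ Γ e T y} (h : ETy φ Φ Γ e T) (hh : T.head ≠ 0)
    (hfv : e.fv ⊆ {y}) : e = .var y := by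
  obtain ⟨x, rfl⟩ := ety_head_var h hh
  have : x = y := by simpa [Expr.fv] using hfv (by simp [Expr.fv])
  rw [this]

/-! ### Substitution for expressions -/

theorem ety_subst_closed {φ Φ Ξ e' T'} (h : ETy φ Φ Ξ e' T') :
    ∀ v T e, Ξ v = some T → ETy φ Φ (fun _ => none) e T → e.fv = ∅ →
      ETy φ Φ (Ξ.minus v) (e'.subst v e) T' := by
  induction h with
  | @var Γ T0 φ Φ x h =>
      intro v T e hv he _
      by_cases hx : x = v
      · subst hx
        rw [h] at hv; cases hv
        simp only [Expr.subst, if_pos rfl]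
        exact ety_weaken he _ (fun _ => Or.inl rfl)
      · simp only [Expr.subst, if_neg hx]
        exact ETy.var (by simp [hx]; exact h)
  | zero => intros; exact ETy.zero
  | succ _ ih =>
      intro v T e hv he hfv
      exact ETy.succ (ih v T e hv he hfv)
  | @sub φ Φ Δ e0 T'' Γ T' h1 hcs hsub ih =>
      intro v T e hv he hfv
      have hv' := hcs v; rw [hv] at hv'
      obtain ⟨T₂, hT₂, hTsub⟩ := optSub_some_left hv'
      exact ETy.sub (ih v T₂ e hT₂ (ETy.sub he (ctxSub_refl _) hTsub) hfv)
        (ctxSub_minus hcs v) hsub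

theorem ety_subst_merge {φ Φ Ξ e' T'} (h : ETy φ Φ Ξ e' T') :
    ∀ v y T S R e, v ≠ y → Ξ v = some T → Ξ y = some S → MOK φ Φ R S T →
      ETy φ Φ (Ctx.only y R) e T → e.fv ⊆ {y} →
      ETy φ Φ ((Ξ.minus v).update y R) (e'.subst v e) T' := by
  induction h with
  | @var Γ T0 φ Φ x h =>
      intro v y T S R e hvy hv hy hmok he hfv
      by_cases hx : x = v
      · subst hx
        rw [h] at hv; cases hv
        simp only [Expr.subst, if_pos rfl]
        refine ety_weaken he _ ?_
        intro z
        by_cases hz : z = y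
        · subst hz; right; simp
        · left; simp [hz]
      · simp only [Expr.subst, if_neg hx]
        by_cases hxy : x = y
        · subst hxy
          rw [h] at hy; cases hy
          exact ETy.sub (ETy.var (by simp)) (ctxSub_refl _) (mok_sub_L hmok)
        · exact ETy.var (by simp [hxy, hx]; exact h)
  | zero => intros; exact ETy.zero
  | succ _ ih =>
      intro v y T S R e hvy hv hy hmok he hfv
      exact ETy.succ (ih v y T S R e hvy hv hy hmok he hfv)
  | @sub φ Φ Δ e0 T'' Γ T' h1 hcs hsub ih =>
      intro v y T S R e hvy hv hy hmok he hfv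
      have hv' := hcs v; rw [hv] at hv'
      obtain ⟨T₂, hT₂, hTsub⟩ := optSub_some_left hv'
      have hy' := hcs y; rw [hy] at hy'
      obtain ⟨S₂, hS₂, hSsub⟩ := optSub_some_left hy'
      obtain ⟨R₂, hmok₂, hRsub, hnatid⟩ := mok_mono hmok hSsub hTsub
      have he₂ : ETy φ Φ (Ctx.only y R₂) e T₂ := by
        by_cases hh : T.head = 0
        · rw [hnatid hh]
          exact ETy.sub he (ctxSub_refl _) hTsub
        · have hev : e = .var y := ety_var_of_fv he hh hfv
          subst hev
          exact he_of_sub y (mok_sub_T hmok₂ (by rw [← sub_head hTsub]; exact hh))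
      exact ETy.sub (ih v y T₂ S₂ R₂ e hvy hT₂ hS₂ hmok₂ he₂ hfv)
        (ctxSub_update (ctxSub_minus hcs v) hRsub) hsub
/-! ### More context / type helpers -/

theorem optPar_none_inv {o1 o2 : Option Ty} (h : OptPar o1 o2 none) :
    o1 = none ∧ o2 = none := by cases h; exact ⟨rfl, rfl⟩

theorem optPar_some_inv {o1 o2 : Option Ty} {T : Ty} (h : OptPar o1 o2 (some T)) :
    ∃ T₁ T₂, o1 = some T₁ ∧ o2 = some T₂ ∧ TyPar T₁ T₂ T := by
  cases h with | some hp => exact ⟨_, _, rfl, rfl, hp⟩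

theorem tmap_minus (f : Ty → Ty) (Γ : Ctx) (v : Name) :
    (Γ.minus v).tmap f = (Γ.tmap f).minus v := by
  funext x; by_cases hx : x = v <;> simp [hx]

theorem minus_update_comm {Γ : Ctx} {v a : Name} {T : Ty} (h : v ≠ a) :
    (Γ.update a T).minus v = (Γ.minus v).update a T := by
  funext x
  by_cases hx : x = v
  · subst hx; simp [h]
  · by_cases ha : x = a <;> simp [hx, ha, Ne.symm h]

theorem ctxPar_minus {Γ Δ Θ : Ctx} (h : CtxPar Γ Δ Θ) (v : Name) :
    CtxPar (Γ.minus v) (Δ.minus v) (Θ.minus v) := by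
  intro x
  by_cases hx : x = v
  · subst hx; simp; exact OptPar.none
  · simp [hx]; exact h x

theorem ctxPar_update {Γ Δ Θ : Ctx} (h : CtxPar Γ Δ Θ) {y T₁ T₂ T₃}
    (ht : TyPar T₁ T₂ T₃) :
    CtxPar (Γ.update y T₁) (Δ.update y T₂) (Θ.update y T₃) := by
  intro x
  by_cases hx : x = y
  · subst hx; simp; exact OptPar.some ht
  · simp [hx]; exact h x

theorem ety_closed_head {φ Φ Γ e T} (h : ETy φ Φ Γ e T) (hfv : e.fv = ∅) :
    T.head = 0 := by
  by_contra hh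
  obtain ⟨x, rfl⟩ := ety_head_var h hh
  simp [Expr.fv] at hfv

theorem head_zero_nat {T : Ty} (h : T.head = 0) : ∃ I J, T = .nat I J := by
  cases T with
  | nat I J => exact ⟨I, J, rfl⟩
  | ch _ _ => simp [Ty.head] at h
  | serv _ _ _ _ => simp [Ty.head] at h

theorem delayI_nat_inv {A : Interval} {T₀ : Ty} {I J : Idx}
    (h : Ty.delayI A T₀ = .nat I J) : T₀ = .nat I J := by
  cases T₀ <;> simp [Ty.delayI] at h ⊢ <;> exact h

theorem delayC_nat_inv {c : Cap} {T₀ : Ty} {I J : Idx}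
    (h : Ty.delayC c T₀ = .nat I J) : T₀ = .nat I J := by
  cases T₀ <;> simp [Ty.delayC] at h ⊢ <;> exact h

theorem bangT_nat_inv {T₀ : Ty} {I J : Idx} (h : Ty.bangT T₀ = .nat I J) :
    T₀ = .nat I J := by
  cases T₀ <;> simp [Ty.bangT] at h ⊢ <;> exact h

theorem typar_nat_inv {T₁ T₂ : Ty} {I J : Idx} (h : TyPar T₁ T₂ (.nat I J)) :
    T₁ = .nat I J ∧ T₂ = .nat I J := by
  cases h; exact ⟨rfl, rfl⟩

/-! ### Substitution of a closed expression in a process -/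

theorem pty_subst_closed {φ Φ Ξ P K} (h : PTy φ Φ Ξ P K) :
    ∀ v T e, Ξ v = some T → ETy φ Φ (fun _ => none) e T → e.fv = ∅ →
      PTy φ Φ (Ξ.minus v) (P.subst v e) K := by
  induction h with
  | zero => intro v T e hv he hfv; exact PTy.zero
  | @par φ Φ Γ Δ Θ P Q K₁ K₂ h1 h2 hpar ih1 ih2 =>
      intro v T e hv he hfv
      obtain ⟨I, J, rfl⟩ := head_zero_nat (ety_closed_head he hfv)
      have hp := hpar v; rw [hv] at hp
      obtain ⟨T₁, T₂, hv1, hv2, htp⟩ := optPar_some_inv hp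
      obtain ⟨rfl, rfl⟩ := typar_nat_inv htp
      exact PTy.par (ih1 v _ e hv1 he hfv) (ih2 v _ e hv2 he hfv) (ctxPar_minus hpar v)
  | @tick φ Φ Γ P K hP ih =>
      intro v T e hv he hfv
      obtain ⟨I, J, rfl⟩ := head_zero_nat (ety_closed_head he hfv)
      simp only [Ctx.tmap_apply] at hv
      obtain ⟨T₀, hT₀, hmap⟩ := Option.map_eq_some_iff.1 hv
      obtain rfl := delayI_nat_inv hmap
      have ihr := ih v _ e hT₀ he hfv
      rw [← tmap_minus]
      exact PTy.tick ihr
  | @ich φ Φ Γ a xs Ts U jc P K hΓa hxs haxs hnodup hlen hP ih =>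
      intro v T e hv he hfv
      obtain ⟨I, J, rfl⟩ := head_zero_nat (ety_closed_head he hfv)
      by_cases hva : v = a
      · subst hva; rw [Ctx.update_apply, if_pos rfl] at hv; exact absurd hv (by simp)
      · rw [Ctx.update_apply, if_neg hva, Ctx.tmap_apply] at hv
        obtain ⟨T₀, hT₀, hmap⟩ := Option.map_eq_some_iff.1 hv
        obtain rfl := delayC_nat_inv hmap
        have hvxs : v ∉ xs := fun hmem => by rw [hxs v hmem] at hT₀; cases hT₀
        have hΞ₁v : ((Γ.update a (.ch Ts U)).extend xs Ts) v = some (.nat I J) := by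
          rw [Ctx.extend_apply_notMem _ hvxs, Ctx.update_apply, if_neg hva]; exact hT₀
        have ihr := ih v _ e hΞ₁v he hfv
        rw [← Ctx.extend_minus_comm hvxs, minus_update_comm hva] at ihr
        have hres := PTy.ich (Γ := Γ.minus v) (jc := jc)
          (by simp [Ne.symm hva, hΓa])
          (fun x hx => by by_cases h : x = v <;> simp [h, hxs x hx]) haxs hnodup hlen ihr
        rw [tmap_minus, ← minus_update_comm hva] at hres
        simpa [Proc.subst, substName, Ne.symm hva, hvxs] using hres
  | @iserv φ Φ Γ a xs bs Ts U jc P K hΓa hxs haxs hnodup hlen hP ih =>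
      intro v T e hv he hfv
      obtain ⟨I, J, rfl⟩ := head_zero_nat (ety_closed_head he hfv)
      by_cases hva : v = a
      · subst hva; rw [Ctx.update_apply, if_pos rfl] at hv; exact absurd hv (by simp)
      · rw [Ctx.update_apply, if_neg hva, Ctx.tmap_apply, Ctx.tmap_apply] at hv
        rw [Option.map_map] at hv
        obtain ⟨T₀, hT₀, hmap⟩ := Option.map_eq_some_iff.1 hv
        obtain rfl := bangT_nat_inv (delayC_nat_inv hmap)
        have hvxs : v ∉ xs := fun hmem => by rw [hxs v hmem] at hT₀; cases hT₀
        have hΞ₁v : ((Γ.update a (.serv bs K Ts U)).extend xs Ts) v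
            = some (.nat I J) := by
          rw [Ctx.extend_apply_notMem _ hvxs, Ctx.update_apply, if_neg hva]; exact hT₀
        have ihr := ih v _ e hΞ₁v (ety_conv (Weaker.refl Φ) he) hfv
        rw [← Ctx.extend_minus_comm hvxs, minus_update_comm hva] at ihr
        have hres := PTy.iserv (Γ := Γ.minus v) (jc := jc)
          (by simp [Ne.symm hva, hΓa])
          (fun x hx => by by_cases h : x = v <;> simp [h, hxs x hx]) haxs hnodup hlen ihr
        rw [tmap_minus, tmap_minus, ← minus_update_comm hva] at hres
        simpa [Proc.subst, substName, Ne.symm hva, hvxs] using hres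
  | @och φ Φ Γ Γ' Θ a es Ts U V jc P K hΓa hΓ'a hlen hes hP hpar ih =>
      intro v T e hv he hfv
      obtain ⟨I, J, rfl⟩ := head_zero_nat (ety_closed_head he hfv)
      by_cases hva : v = a
      · subst hva; rw [Ctx.update_apply, if_pos rfl] at hv; exact absurd hv (by simp)
      · rw [Ctx.update_apply, if_neg hva, Ctx.tmap_apply] at hv
        obtain ⟨T₀, hT₀, hmap⟩ := Option.map_eq_some_iff.1 hv
        obtain rfl := delayC_nat_inv hmap
        have hp := hpar v; rw [hT₀] at hp
        obtain ⟨T₁, T₂, hv1, hv2, htp⟩ := optPar_some_inv hp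
        obtain ⟨rfl, rfl⟩ := typar_nat_inv htp
        have ihP := ih v _ e (by rw [Ctx.update_apply, if_neg hva]; exact hv1) he hfv
        rw [minus_update_comm hva] at ihP
        have hes' : ∀ p ∈ (es.map (fun e' => e'.subst v e)).zip Ts,
            ETy φ Φ ((Γ'.minus v).update a (.ch Ts V)) p.1 p.2 := by
          intro p hp'
          obtain ⟨q, hq, rfl⟩ := mem_zip_map_left _ _ _ _ hp'
          have := ety_subst_closed (hes q hq) v _ e
            (by rw [Ctx.update_apply, if_neg hva]; exact hv2) he hfv
          rwa [minus_update_comm hva] at this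
        have hres := PTy.och (Γ := Γ.minus v) (Γ' := Γ'.minus v) (jc := jc)
          (by simp [Ne.symm hva, hΓa]) (by simp [Ne.symm hva, hΓ'a])
          (by simpa using hlen) hes' ihP (ctxPar_minus hpar v)
        rw [tmap_minus, ← minus_update_comm hva] at hres
        simpa [Proc.subst, substName, Ne.symm hva] using hres
  | @oserv φ Φ Γ Γ' Θ a es bs Is Ts U V jc P K K' hΓa hΓ'a hlen hlenbs hes hP hpar ih =>
      intro v T e hv he hfv
      obtain ⟨I, J, rfl⟩ := head_zero_nat (ety_closed_head he hfv)
      by_cases hva : v = a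
      · subst hva; rw [Ctx.update_apply, if_pos rfl] at hv; exact absurd hv (by simp)
      · rw [Ctx.update_apply, if_neg hva, Ctx.tmap_apply] at hv
        obtain ⟨T₀, hT₀, hmap⟩ := Option.map_eq_some_iff.1 hv
        obtain rfl := delayC_nat_inv hmap
        have hp := hpar v; rw [hT₀] at hp
        obtain ⟨T₁, T₂, hv1, hv2, htp⟩ := optPar_some_inv hp
        obtain ⟨rfl, rfl⟩ := typar_nat_inv htp
        have ihP := ih v _ e (by rw [Ctx.update_apply, if_neg hva]; exact hv1) he hfv
        rw [minus_update_comm hva] at ihP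
        have hes' : ∀ p ∈ (es.map (fun e' => e'.subst v e)).zip
            (Ts.map (fun T => T.misubst (bs.zip Is))),
            ETy φ Φ ((Γ'.minus v).update a (.serv bs K Ts V)) p.1 p.2 := by
          intro p hp'
          obtain ⟨q, hq, rfl⟩ := mem_zip_map_left _ _ _ _ hp'
          have := ety_subst_closed (hes q hq) v _ e
            (by rw [Ctx.update_apply, if_neg hva]; exact hv2) he hfv
          rwa [minus_update_comm hva] at this
        have hres := PTy.oserv (Γ := Γ.minus v) (Γ' := Γ'.minus v) (jc := jc)
          (by simp [Ne.symm hva, hΓa]) (by simp [Ne.symm hva, hΓ'a])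
          (by simpa using hlen) hlenbs hes' ihP (ctxPar_minus hpar v)
        rw [tmap_minus, ← minus_update_comm hva] at hres
        simpa [Proc.subst, substName, Ne.symm hva] using hres
  | @case φ Φ Γ e0 I J P Q x K hE hP hx hQ ihP ihQ =>
      intro v T e hv he hfv
      have hvx : v ≠ x := fun h => by rw [h, hx] at hv; cases hv
      have ihP' := ihP v T e hv (ety_conv (Weaker.cons _ _) he) hfv
      have ihQ' := ihQ v T e (by rw [Ctx.update_apply, if_neg hvx]; exact hv)
        (ety_conv (Weaker.cons _ _) he) hfv
      rw [minus_update_comm hvx] at ihQ'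
      have hE' := ety_subst_closed hE v T e hv he hfv
      have hres := PTy.case hE' ihP' (by simp [Ne.symm hvx, hx]) ihQ'
      simpa [Proc.subst, hvx] using hres
  | @nu φ Φ Γ a Ta P K hΓa hrel hP ih =>
      intro v T e hv he hfv
      have hva : v ≠ a := fun h => by rw [h, hΓa] at hv; cases hv
      have ihr := ih v T e (by rw [Ctx.update_apply, if_neg hva]; exact hv) he hfv
      rw [minus_update_comm hva] at ihr
      have hres := PTy.nu (by simp [Ne.symm hva, hΓa]) hrel ihr
      simpa [Proc.subst, hva] using hres
  | @sub φ Φ Γ Δ P K K' hP hcs hK ih =>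
      intro v T e hv he hfv
      have hv' := hcs v; rw [hv] at hv'
      obtain ⟨T₂, hT₂, hTsub⟩ := optSub_some_left hv'
      exact PTy.sub (ih v T₂ e hT₂ (ETy.sub he (ctxSub_refl _) hTsub) hfv)
        (ctxSub_minus hcs v) hK
/-! ### More context equalities -/

theorem minus_update_same (Γ : Ctx) (v : Name) (T : Ty) :
    (Γ.update v T).minus v = Γ.minus v := by
  funext x; by_cases hx : x = v <;> simp [hx]

theorem update_minus_same (Γ : Ctx) (y : Name) (T : Ty) :
    (Γ.minus y).update y T = Γ.update y T := by
  funext x; by_cases hx : x = y <;> simp [hx]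

theorem UCongr.parCtxL {a b c : Usage} (h : UCongr a b) : UCongr (.par a c) (.par b c) :=
  UCongr.parCtx h UCongr.refl

theorem UCongr.parCtxR {a b c : Usage} (h : UCongr b c) : UCongr (.par a b) (.par a c) :=
  UCongr.parCtx UCongr.refl h

/-- Adaptation of the typing of `e` to new merge data. -/
theorem he_adapt {φ Φ} {y : Name} {e : Expr} {R T R' S' T' : Ty}
    (hmok' : MOK φ Φ R' S' T') (he : ETy φ Φ (Ctx.only y R) e T)
    (hfv : e.fv ⊆ {y}) (hhead : T'.head = T.head)
    (hid : T.head = 0 → R' = R ∧ T' = T) :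
    ETy φ Φ (Ctx.only y R') e T' := by
  by_cases hh : T.head = 0
  · obtain ⟨h1, h2⟩ := hid hh; rw [h1, h2]; exact he
  · have hev := ety_var_of_fv he hh hfv
    rw [hev]
    exact he_of_sub y (mok_sub_T hmok' (by rw [hhead]; exact hh))

/-! ### MOK decomposition lemmas -/

theorem mok_split {φ Φ R S T S₁ S₂ T₁ T₂} (hmok : MOK φ Φ R S T)
    (hS : TyPar S₁ S₂ S) (hT : TyPar T₁ T₂ T) :
    ∃ R₁ R₂ R₀, MOK φ Φ R₁ S₁ T₁ ∧ MOK φ Φ R₂ S₂ T₂ ∧ TyPar R₁ R₂ R₀ ∧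
      Sub φ Φ R R₀ ∧ T₁.head = T.head ∧ T₂.head = T.head ∧
      (T.head = 0 → R₁ = R ∧ R₂ = R ∧ T₁ = T ∧ T₂ = T) := by
  cases hmok with
  | nat h1 h2 =>
      cases hS; cases hT
      exact ⟨_, _, _, MOK.nat h1 h2, MOK.nat h1 h2, TyPar.nat, sub_refl _, rfl, rfl,
        fun _ => ⟨rfl, rfl, rfl, rfl⟩⟩
  | ch hEq hW =>
      cases hS with | ch =>
      cases hT with | ch =>
      exact ⟨_, _, _, MOK.ch hEq (subU_refl _), MOK.ch hEq (subU_refl _), TyPar.ch,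
        sub_ch_of (tyEqL_refl _) (SubU.trans hW (subU_of_congr UCongr.shuffle)),
        rfl, rfl, fun h => by simp [Ty.head] at h⟩
  | serv hEq k1 k2 hW =>
      cases hS with | serv =>
      cases hT with | serv =>
      exact ⟨_, _, _, MOK.serv hEq k1 k2 (subU_refl _), MOK.serv hEq k1 k2 (subU_refl _),
        TyPar.serv,
        sub_serv_of (tyEqL_refl _) (semEqI_refl _)
          (SubU.trans hW (subU_of_congr UCongr.shuffle)),
        rfl, rfl, fun h => by simp [Ty.head] at h⟩

theorem mok_delayI {φ Φ R S T A S₀ T₀} (hmok : MOK φ Φ R S T)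
    (hS : S = Ty.delayI A S₀) (hT : T = Ty.delayI A T₀) :
    ∃ R₀, MOK φ Φ R₀ S₀ T₀ ∧ Sub φ Φ R (Ty.delayI A R₀) ∧ T₀.head = T.head ∧
      (T.head = 0 → R₀ = R ∧ T₀ = T) := by
  cases hmok with
  | nat h1 h2 =>
      cases S₀ <;> simp [Ty.delayI] at hS
      cases T₀ <;> simp [Ty.delayI] at hT
      obtain ⟨rfl, rfl⟩ := hS
      obtain ⟨rfl, rfl⟩ := hT
      exact ⟨_, MOK.nat h1 h2, sub_refl _, rfl, fun _ => ⟨rfl, rfl⟩⟩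
  | ch hEq hW =>
      cases S₀ <;> simp [Ty.delayI] at hS
      cases T₀ <;> simp [Ty.delayI] at hT
      obtain ⟨rfl, rfl⟩ := hS
      obtain ⟨rfl, rfl⟩ := hT
      exact ⟨_, MOK.ch hEq (subU_refl _), sub_ch_of (tyEqL_refl _) hW, rfl,
        fun h => by simp [Ty.head] at h⟩
  | serv hEq k1 k2 hW =>
      cases S₀ <;> simp [Ty.delayI] at hS
      cases T₀ <;> simp [Ty.delayI] at hT
      obtain ⟨rfl, rfl, rfl, rfl⟩ := hS
      obtain ⟨rfl, rfl, rfl, rfl⟩ := hT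
      exact ⟨_, MOK.serv hEq k1 k2 (subU_refl _),
        sub_serv_of (tyEqL_refl _) (semEqI_refl _) hW, rfl,
        fun h => by simp [Ty.head] at h⟩

theorem mok_delayC {φ Φ R S T c S₀ T₀} (hmok : MOK φ Φ R S T)
    (hS : S = Ty.delayC c S₀) (hT : T = Ty.delayC c T₀) :
    ∃ R₀, MOK φ Φ R₀ S₀ T₀ ∧ Sub φ Φ R (Ty.delayC c R₀) ∧ T₀.head = T.head ∧
      (T.head = 0 → R₀ = R ∧ T₀ = T) := by
  cases hmok with
  | nat h1 h2 =>
      cases S₀ <;> simp [Ty.delayC] at hS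
      cases T₀ <;> simp [Ty.delayC] at hT
      obtain ⟨rfl, rfl⟩ := hS
      obtain ⟨rfl, rfl⟩ := hT
      exact ⟨_, MOK.nat h1 h2, sub_refl _, rfl, fun _ => ⟨rfl, rfl⟩⟩
  | ch hEq hW =>
      cases S₀ <;> simp [Ty.delayC] at hS
      cases T₀ <;> simp [Ty.delayC] at hT
      obtain ⟨rfl, rfl⟩ := hS
      obtain ⟨rfl, rfl⟩ := hT
      exact ⟨_, MOK.ch hEq (subU_refl _), sub_ch_of (tyEqL_refl _) hW, rfl,
        fun h => by simp [Ty.head] at h⟩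
  | serv hEq k1 k2 hW =>
      cases S₀ <;> simp [Ty.delayC] at hS
      cases T₀ <;> simp [Ty.delayC] at hT
      obtain ⟨rfl, rfl, rfl, rfl⟩ := hS
      obtain ⟨rfl, rfl, rfl, rfl⟩ := hT
      exact ⟨_, MOK.serv hEq k1 k2 (subU_refl _),
        sub_serv_of (tyEqL_refl _) (semEqI_refl _) hW, rfl,
        fun h => by simp [Ty.head] at h⟩

theorem mok_bangC {φ Φ R S T c S₀ T₀} (hmok : MOK φ Φ R S T)
    (hS : S = Ty.delayC c (Ty.bangT S₀)) (hT : T = Ty.delayC c (Ty.bangT T₀)) :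
    ∃ R₀, MOK φ Φ R₀ S₀ T₀ ∧ Sub φ Φ R (Ty.delayC c (Ty.bangT R₀)) ∧
      T₀.head = T.head ∧ (T.head = 0 → R₀ = R ∧ T₀ = T) := by
  cases hmok with
  | nat h1 h2 =>
      cases S₀ <;> simp [Ty.delayC, Ty.bangT] at hS
      cases T₀ <;> simp [Ty.delayC, Ty.bangT] at hT
      obtain ⟨rfl, rfl⟩ := hS
      obtain ⟨rfl, rfl⟩ := hT
      exact ⟨_, MOK.nat h1 h2, sub_refl _, rfl, fun _ => ⟨rfl, rfl⟩⟩
  | ch hEq hW =>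
      cases S₀ <;> simp [Ty.delayC, Ty.bangT] at hS
      cases T₀ <;> simp [Ty.delayC, Ty.bangT] at hT
      obtain ⟨rfl, rfl⟩ := hS
      obtain ⟨rfl, rfl⟩ := hT
      refine ⟨_, MOK.ch hEq (subU_refl _), sub_ch_of (tyEqL_refl _) ?_, rfl,
        fun h => by simp [Ty.head] at h⟩
      exact SubU.trans hW (subU_of_congr (UCongr.symm UCongr.bangPar))
  | serv hEq k1 k2 hW =>
      cases S₀ <;> simp [Ty.delayC, Ty.bangT] at hS
      cases T₀ <;> simp [Ty.delayC, Ty.bangT] at hT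
      obtain ⟨rfl, rfl, rfl, rfl⟩ := hS
      obtain ⟨rfl, rfl, rfl, rfl⟩ := hT
      refine ⟨_, MOK.serv hEq k1 k2 (subU_refl _),
        sub_serv_of (tyEqL_refl _) (semEqI_refl _) ?_, rfl,
        fun h => by simp [Ty.head] at h⟩
      exact SubU.trans hW (subU_of_congr (UCongr.symm UCongr.bangPar))

theorem mok_split_delayC {φ Φ R S T c S₀ T₀ S₁ S₂ T₁ T₂} (hmok : MOK φ Φ R S T)
    (hS : S = Ty.delayC c S₀) (hT : T = Ty.delayC c T₀)
    (hS0 : TyPar S₁ S₂ S₀) (hT0 : TyPar T₁ T₂ T₀) :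
    ∃ R₁ R₂ R₀, MOK φ Φ R₁ S₁ T₁ ∧ MOK φ Φ R₂ S₂ T₂ ∧ TyPar R₁ R₂ R₀ ∧
      Sub φ Φ R (Ty.delayC c R₀) ∧ T₁.head = T.head ∧ T₂.head = T.head ∧
      (T.head = 0 → R₁ = R ∧ R₂ = R ∧ T₁ = T ∧ T₂ = T) := by
  cases hmok with
  | nat h1 h2 =>
      cases S₀ <;> simp [Ty.delayC] at hS
      cases T₀ <;> simp [Ty.delayC] at hT
      obtain ⟨rfl, rfl⟩ := hS
      obtain ⟨rfl, rfl⟩ := hT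
      cases hS0; cases hT0
      exact ⟨_, _, _, MOK.nat h1 h2, MOK.nat h1 h2, TyPar.nat, sub_refl _, rfl, rfl,
        fun _ => ⟨rfl, rfl, rfl, rfl⟩⟩
  | ch hEq hW =>
      cases S₀ <;> simp [Ty.delayC] at hS
      cases T₀ <;> simp [Ty.delayC] at hT
      obtain ⟨rfl, rfl⟩ := hS
      obtain ⟨rfl, rfl⟩ := hT
      cases hS0 with | ch =>
      cases hT0 with | ch =>
      exact ⟨_, _, _, MOK.ch hEq (subU_refl _), MOK.ch hEq (subU_refl _), TyPar.ch,
        sub_ch_of (tyEqL_refl _) (SubU.trans hW (subU_of_congr UCongr.shuffle)),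
        rfl, rfl, fun h => by simp [Ty.head] at h⟩
  | serv hEq k1 k2 hW =>
      cases S₀ <;> simp [Ty.delayC] at hS
      cases T₀ <;> simp [Ty.delayC] at hT
      obtain ⟨rfl, rfl, rfl, rfl⟩ := hS
      obtain ⟨rfl, rfl, rfl, rfl⟩ := hT
      cases hS0 with | serv =>
      cases hT0 with | serv =>
      exact ⟨_, _, _, MOK.serv hEq k1 k2 (subU_refl _),
        MOK.serv hEq k1 k2 (subU_refl _), TyPar.serv,
        sub_serv_of (tyEqL_refl _) (semEqI_refl _)
          (SubU.trans hW (subU_of_congr UCongr.shuffle)),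
        rfl, rfl, fun h => by simp [Ty.head] at h⟩
theorem update_update_same (Γ : Ctx) (y : Name) (A B : Ty) :
    (Γ.update y A).update y B = Γ.update y B := by
  funext x; by_cases hx : x = y <;> simp [hx]

theorem update_update_comm {Γ : Ctx} {x y : Name} {A B : Ty} (h : x ≠ y) :
    (Γ.update x A).update y B = (Γ.update y B).update x A := by
  funext z
  by_cases hzx : z = x
  · subst hzx
    by_cases hzy : z = y
    · exact absurd hzy h
    · simp [hzy]
  · by_cases hzy : z = y <;> simp [hzx, hzy, Ne.symm h]

/-- The main merging substitution lemma for processes. -/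
theorem pty_subst_merge {φ Φ Ξ P K} (h : PTy φ Φ Ξ P K) :
    ∀ v y T S R e, v ≠ y → Ξ v = some T → Ξ y = some S → MOK φ Φ R S T →
      ETy φ Φ (Ctx.only y R) e T → e.fv ⊆ {y} →
      PTy φ Φ ((Ξ.minus v).update y R) (P.subst v e) K := by
  induction h with
  | zero => intros; exact PTy.zero
  | @par φ Φ Γ Δ Θ P Q K₁ K₂ h1 h2 hpar ih1 ih2 =>
      intro v y T S R e hvy hv hy hmok he hfv
      have hpv := hpar v; rw [hv] at hpv
      obtain ⟨T₁, T₂, hv1, hv2, htpT⟩ := optPar_some_inv hpv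
      have hpy := hpar y; rw [hy] at hpy
      obtain ⟨S₁, S₂, hy1, hy2, htpS⟩ := optPar_some_inv hpy
      obtain ⟨R₁, R₂, R₀, hm1, hm2, htpR, hsub, hh1, hh2, hid⟩ := mok_split hmok htpS htpT
      have he1 : ETy φ Φ (Ctx.only y R₁) e T₁ :=
        he_adapt hm1 he hfv hh1 (fun h => ⟨(hid h).1, (hid h).2.2.1⟩)
      have he2 : ETy φ Φ (Ctx.only y R₂) e T₂ :=
        he_adapt hm2 he hfv hh2 (fun h => ⟨(hid h).2.1, (hid h).2.2.2⟩)
      refine pty_cast (PTy.par (ih1 v y T₁ S₁ R₁ e hvy hv1 hy1 hm1 he1 hfv)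
        (ih2 v y T₂ S₂ R₂ e hvy hv2 hy2 hm2 he2 hfv)
        (ctxPar_update (ctxPar_minus hpar v) htpR)) ?_
      exact ctxSub_update (ctxSub_refl _) hsub
  | @tick φ Φ Γ P K hP ih =>
      intro v y T S R e hvy hv hy hmok he hfv
      simp only [Ctx.tmap_apply] at hv hy
      obtain ⟨T₀, hT₀, hTmap⟩ := Option.map_eq_some_iff.1 hv
      obtain ⟨S₀, hS₀, hSmap⟩ := Option.map_eq_some_iff.1 hy
      obtain ⟨R₀, hm0, hsub, hh0, hid0⟩ := mok_delayI hmok hSmap.symm hTmap.symm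
      have he0 : ETy φ Φ (Ctx.only y R₀) e T₀ := he_adapt hm0 he hfv hh0 hid0
      have ihr := PTy.tick (ih v y T₀ S₀ R₀ e hvy hT₀ hS₀ hm0 he0 hfv)
      refine pty_cast ihr ?_
      intro x
      by_cases hxy : x = y
      · subst hxy; simp [Ne.symm hvy]; exact OptSub.some hsub
      · by_cases hxv : x = v
        · subst hxv; simp [hxy]; exact OptSub.none
        · simp [hxy, hxv]; exact optSub_refl _
  | @case φ Φ Γ e0 I J P Q x K hE hP hx hQ ihP ihQ =>
      intro v y T S R e hvy hv hy hmok he hfv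
      have hvx : v ≠ x := fun hh => by rw [hh, hx] at hv; cases hv
      have hyx : y ≠ x := fun hh => by rw [hh, hx] at hy; cases hy
      have hw1 : Weaker Φ (⟨I, (· ≤ ·), .const 0⟩ :: Φ) := Weaker.cons _ _
      have hw2 : Weaker Φ (⟨.const 1, (· ≤ ·), J⟩ :: Φ) := Weaker.cons _ _
      have ihP' := ihP v y T S R e hvy hv hy (mok_conv hw1 hmok) (ety_conv hw1 he) hfv
      have ihQ' := ihQ v y T S R e hvy
        (by rw [Ctx.update_apply, if_neg hvx]; exact hv)
        (by rw [Ctx.update_apply, if_neg hyx]; exact hy)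
        (mok_conv hw2 hmok) (ety_conv hw2 he) hfv
      rw [minus_update_comm hvx, update_update_comm (Ne.symm hyx)] at ihQ'
      have hE' := ety_subst_merge hE v y T S R e hvy hv hy hmok he hfv
      have hres := PTy.case hE' ihP' (by simp [Ne.symm hvx, Ne.symm hyx, hx]) ihQ'
      simpa [Proc.subst, hvx] using hres
  | @nu φ Φ Γ a Ta P K hΓa hrel hP ih =>
      intro v y T S R e hvy hv hy hmok he hfv
      have hva : v ≠ a := fun hh => by rw [hh, hΓa] at hv; cases hv
      have hya : y ≠ a := fun hh => by rw [hh, hΓa] at hy; cases hy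
      have ihr := ih v y T S R e hvy
        (by rw [Ctx.update_apply, if_neg hva]; exact hv)
        (by rw [Ctx.update_apply, if_neg hya]; exact hy) hmok he hfv
      rw [minus_update_comm hva, update_update_comm (Ne.symm hya)] at ihr
      have hres := PTy.nu (by simp [Ne.symm hva, Ne.symm hya, hΓa]) hrel ihr
      simpa [Proc.subst, hva] using hres
  | @sub φ Φ Γ Δ P K K' hP hcs hK ih =>
      intro v y T S R e hvy hv hy hmok he hfv
      have hv' := hcs v; rw [hv] at hv'
      obtain ⟨T₂, hT₂, hTsub⟩ := optSub_some_left hv'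
      have hy' := hcs y; rw [hy] at hy'
      obtain ⟨S₂, hS₂, hSsub⟩ := optSub_some_left hy'
      obtain ⟨R₂, hmok₂, hRsub, hnatid⟩ := mok_mono hmok hSsub hTsub
      have he₂ : ETy φ Φ (Ctx.only y R₂) e T₂ := by
        by_cases hh : T.head = 0
        · rw [hnatid hh]; exact ETy.sub he (ctxSub_refl _) hTsub
        · rw [ety_var_of_fv he hh hfv]
          exact he_of_sub y (mok_sub_T hmok₂ (by rw [← sub_head hTsub]; exact hh))
      exact PTy.sub (ih v y T₂ S₂ R₂ e hvy hT₂ hS₂ hmok₂ he₂ hfv)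
        (ctxSub_update (ctxSub_minus hcs v) hRsub) hK
  | @ich φ Φ Γ a xs Ts U jc P K hΓa hxs haxs hnodup hlen hP ih =>
      intro v y T S R e hvy hv hy hmok he hfv
      by_cases hva : v = a
      · -- v is the input subject
        subst hva
        rw [Ctx.update_apply, if_pos rfl] at hv
        injection hv with hv; subst hv
        rw [Ctx.update_apply, if_neg (Ne.symm hvy), Ctx.tmap_apply] at hy
        obtain ⟨S₀, hS₀, hSmap⟩ := Option.map_eq_some_iff.1 hy
        rw [← hSmap] at hmok
        cases S₀ with
        | nat I0 J0 => cases hmok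
        | serv _ _ _ _ => cases hmok
        | ch Ss X₀ =>
          cases hmok with | ch hEq hW =>
          have hev := ety_var_of_fv he (by simp [Ty.head]) hfv
          subst hev
          have hyxs : y ∉ xs := fun hm => by rw [hxs y hm] at hS₀; cases hS₀
          have hΞ₁v : ((Γ.update v (.ch Ts U)).extend xs Ts) v = some (.ch Ts U) := by
            rw [Ctx.extend_apply_notMem _ haxs]; simp
          have hΞ₁y : ((Γ.update v (.ch Ts U)).extend xs Ts) y = some (.ch Ss X₀) := by
            rw [Ctx.extend_apply_notMem _ hyxs, Ctx.update_apply, if_neg (Ne.symm hvy)]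
            exact hS₀
          have hm1 : MOK φ Φ (.ch Ss (X₀.par U)) (.ch Ss X₀) (.ch Ts U) :=
            MOK.ch hEq (subU_refl _)
          have he1 : ETy φ Φ (Ctx.only y (.ch Ss (X₀.par U))) (.var y) (.ch Ts U) :=
            he_of_sub y (sub_ch_of hEq subU_par_dropL)
          have ihr := ih v y _ _ _ (.var y) hvy hΞ₁v hΞ₁y hm1 he1 (by simp [Expr.fv])
          rw [← Ctx.extend_minus_comm haxs, minus_update_same] at ihr
          have ihr' : PTy φ Φ (Ctx.extend (((Γ.minus v).minus y).update y
              (.ch Ts (X₀.par U))) xs Ts) (P.subst v (.var y)) K := by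
            rw [update_minus_same, Ctx.extend_update_comm hyxs]
            exact pty_cast ihr (ctxSub_update (ctxSub_refl _)
              (sub_ch_of (tyEqL_symm hEq) (subU_refl _)))
          have hres := PTy.ich (Γ := (Γ.minus v).minus y) (jc := jc)
            (by simp)
            (fun x hx => by
              by_cases h1 : x = y <;> by_cases h2 : x = v <;> simp [h1, h2, hxs x hx])
            hyxs hnodup hlen ihr'
          simp only [Proc.subst, substName, if_pos rfl, if_neg haxs]
          refine pty_cast hres ?_
          intro x
          by_cases hxy : x = y
          · subst hxy
            simp [Ne.symm hvy]
            exact OptSub.some (sub_ch_of hEq (SubU.trans hW subU_scope_inp'))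
          · by_cases hxv : x = v
            · subst hxv; simp [hxy]; exact OptSub.none
            · simp [hxy, hxv]; exact optSub_refl _
      · by_cases hya : y = a
        · -- y is the input subject
          subst hya
          rw [Ctx.update_apply, if_pos rfl] at hy
          injection hy with hy; subst hy
          rw [Ctx.update_apply, if_neg hva, Ctx.tmap_apply] at hv
          obtain ⟨T₀, hT₀, hTmap⟩ := Option.map_eq_some_iff.1 hv
          rw [← hTmap] at hmok he
          cases T₀ with
          | nat _ _ => cases hmok
          | serv _ _ _ _ => cases hmok
          | ch Sv X₀ =>
            cases hmok with | ch hEq hW =>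
            have hev := ety_var_of_fv he (by simp [Ty.delayC, Ty.head]) hfv
            subst hev
            have hvxs : v ∉ xs := fun hm => by rw [hxs v hm] at hT₀; cases hT₀
            have hΞ₁v : ((Γ.update y (.ch Ts U)).extend xs Ts) v = some (.ch Sv X₀) := by
              rw [Ctx.extend_apply_notMem _ hvxs, Ctx.update_apply, if_neg hvy]
              exact hT₀
            have hΞ₁y : ((Γ.update y (.ch Ts U)).extend xs Ts) y = some (.ch Ts U) := by
              rw [Ctx.extend_apply_notMem _ haxs]; simp
            have hm1 : MOK φ Φ (.ch Ts (U.par X₀)) (.ch Ts U) (.ch Sv X₀) :=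
              MOK.ch hEq (subU_refl _)
            have he1 : ETy φ Φ (Ctx.only y (.ch Ts (U.par X₀))) (.var y) (.ch Sv X₀) :=
              he_of_sub y (sub_ch_of hEq subU_par_dropL)
            have ihr := ih v y _ _ _ (.var y) hvy hΞ₁v hΞ₁y hm1 he1 (by simp [Expr.fv])
            rw [← Ctx.extend_minus_comm hvxs, minus_update_comm hvy,
              Ctx.extend_update_comm haxs, update_update_same,
              ← Ctx.extend_update_comm haxs] at ihr
            have hres := PTy.ich (Γ := Γ.minus v) (jc := jc)
              (by simp [Ne.symm hvy, hΓa])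
              (fun x hx => by by_cases h2 : x = v <;> simp [h2, hxs x hx])
              haxs hnodup hlen ihr
            simp only [Proc.subst, substName, if_neg (Ne.symm hva), if_neg hvxs]
            refine pty_cast hres ?_
            intro x
            by_cases hxy : x = y
            · subst hxy
              simp [Ne.symm hvy]
              exact OptSub.some (sub_ch_of (tyEqL_refl _) (SubU.trans hW subU_scope_inp))
            · by_cases hxv : x = v
              · subst hxv; simp [hxy]; exact OptSub.none
              · simp [hxy, hxv]; exact optSub_refl _
        · -- neither v nor y is the subject
          rw [Ctx.update_apply, if_neg hva, Ctx.tmap_apply] at hv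
          rw [Ctx.update_apply, if_neg hya, Ctx.tmap_apply] at hy
          obtain ⟨T₀, hT₀, hTmap⟩ := Option.map_eq_some_iff.1 hv
          obtain ⟨S₀, hS₀, hSmap⟩ := Option.map_eq_some_iff.1 hy
          obtain ⟨R₀, hm0, hsub, hh0, hid0⟩ := mok_delayC hmok hSmap.symm hTmap.symm
          have he0 := he_adapt hm0 he hfv hh0 hid0
          have hvxs : v ∉ xs := fun hm => by rw [hxs v hm] at hT₀; cases hT₀
          have hyxs : y ∉ xs := fun hm => by rw [hxs y hm] at hS₀; cases hS₀
          have ihr := ih v y T₀ S₀ R₀ e hvy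
            (by rw [Ctx.extend_apply_notMem _ hvxs, Ctx.update_apply, if_neg hva]
                exact hT₀)
            (by rw [Ctx.extend_apply_notMem _ hyxs, Ctx.update_apply, if_neg hya]
                exact hS₀)
            hm0 he0 hfv
          rw [← Ctx.extend_minus_comm hvxs, minus_update_comm hva,
            ← Ctx.extend_update_comm hyxs,
            update_update_comm (fun h => hya h.symm)] at ihr
          have hres := PTy.ich (Γ := (Γ.minus v).update y R₀) (jc := jc)
            (by simp [Ne.symm hya, Ne.symm hva, hΓa])
            (fun x hx => by
              by_cases h1 : x = y
              · exact absurd (h1 ▸ hx) hyxs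
              · by_cases h2 : x = v <;> simp [h1, h2, hxs x hx, hvy])
            haxs hnodup hlen ihr
          simp only [Proc.subst, substName, if_neg (Ne.symm hva), if_neg hvxs]
          refine pty_cast hres ?_
          intro x
          by_cases hxy : x = y
          · subst hxy
            simp [Ne.symm hvy, hya]
            exact OptSub.some hsub
          · by_cases hxv : x = v
            · subst hxv; simp [hxy, hva]; exact OptSub.none
            · by_cases hxa : x = a
              · subst hxa; simp [hxy, hxv]; exact optSub_refl _
              · simp [hxy, hxv, hxa]; exact optSub_refl _
  | @iserv φ Φ Γ a xs bs Ts U jc P K hΓa hxs haxs hnodup hlen hP ih =>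
      intro v y T S R e hvy hv hy hmok he hfv
      by_cases hva : v = a
      · -- v is the replicated-input subject
        subst hva
        rw [Ctx.update_apply, if_pos rfl] at hv
        injection hv with hv; subst hv
        rw [Ctx.update_apply, if_neg (Ne.symm hvy), Ctx.tmap_apply, Ctx.tmap_apply,
          Option.map_map] at hy
        obtain ⟨S₀, hS₀, hSmap⟩ := Option.map_eq_some_iff.1 hy
        simp only [Function.comp_apply] at hSmap
        rw [← hSmap] at hmok
        cases S₀ with
        | nat I0 J0 => cases hmok
        | ch _ _ => cases hmok
        | serv bs' K₁ Ss X₀ =>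
          cases hmok with | serv hEq k1 k2 hW =>
          have hev := ety_var_of_fv he (by simp [Ty.head]) hfv
          subst hev
          have hyxs : y ∉ xs := fun hm => by rw [hxs y hm] at hS₀; cases hS₀
          have hΞ₁v : ((Γ.update v (.serv bs K Ts U)).extend xs Ts) v
              = some (.serv bs K Ts U) := by
            rw [Ctx.extend_apply_notMem _ haxs]; simp
          have hΞ₁y : ((Γ.update v (.serv bs K Ts U)).extend xs Ts) y
              = some (.serv bs K₁ Ss X₀) := by
            rw [Ctx.extend_apply_notMem _ hyxs, Ctx.update_apply, if_neg (Ne.symm hvy)]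
            exact hS₀
          have hm1 : MOK (φ ∪ bs.toFinset) Φ (.serv bs _ Ss (X₀.par U))
              (.serv bs K₁ Ss X₀) (.serv bs K Ts U) :=
            MOK.serv (tyEqL_conv (Weaker.refl Φ) hEq) (semEqI_phi k1) (semEqI_phi k2)
              (subU_refl _)
          have he1 : ETy (φ ∪ bs.toFinset) Φ (Ctx.only y (.serv bs _ Ss (X₀.par U)))
              (.var y) (.serv bs K Ts U) :=
            he_of_sub y (sub_serv_of (tyEqL_conv (Weaker.refl Φ) hEq) (semEqI_phi k2)
              subU_par_dropL)
          have ihr := ih v y _ _ _ (.var y) hvy hΞ₁v hΞ₁y hm1 he1 (by simp [Expr.fv])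
          rw [← Ctx.extend_minus_comm haxs, minus_update_same] at ihr
          have ihr' : PTy (φ ∪ bs.toFinset) Φ (Ctx.extend (((Γ.minus v).minus y).update y
              (.serv bs K Ts (X₀.par U))) xs Ts) (P.subst v (.var y)) K := by
            rw [update_minus_same, Ctx.extend_update_comm hyxs]
            exact pty_cast ihr (ctxSub_update (ctxSub_refl _)
              (sub_serv_of (tyEqL_conv (Weaker.refl Φ) (tyEqL_symm hEq))
                (semEqI_phi (semEqI_symm k2)) (subU_refl _)))
          have hres := PTy.iserv (Γ := (Γ.minus v).minus y) (jc := jc)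
            (by simp)
            (fun x hx => by
              by_cases h1 : x = y <;> by_cases h2 : x = v <;> simp [h1, h2, hxs x hx])
            hyxs hnodup hlen ihr'
          simp only [Proc.subst, substName, if_pos rfl, if_neg haxs]
          refine pty_cast hres ?_
          intro x
          by_cases hxy : x = y
          · subst hxy
            simp [Ne.symm hvy]
            exact OptSub.some (sub_serv_of hEq (semEqI_phi k2)
              (SubU.trans hW (SubU.trans (subU_of_congr (UCongr.symm UCongr.bangPar))
                (SubU.bangCtx subU_scope_inp'))))
          · by_cases hxv : x = v
            · subst hxv; simp [hxy]; exact OptSub.none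
            · simp [hxy, hxv]; exact optSub_refl _
      · by_cases hya : y = a
        · -- y is the replicated-input subject
          subst hya
          rw [Ctx.update_apply, if_pos rfl] at hy
          injection hy with hy; subst hy
          rw [Ctx.update_apply, if_neg hva, Ctx.tmap_apply, Ctx.tmap_apply,
            Option.map_map] at hv
          obtain ⟨T₀, hT₀, hTmap⟩ := Option.map_eq_some_iff.1 hv
          simp only [Function.comp_apply] at hTmap
          rw [← hTmap] at hmok he
          cases T₀ with
          | nat _ _ => cases hmok
          | ch _ _ => cases hmok
          | serv bs' K₂ Sv X₀ =>
            cases hmok with | serv hEq k1 k2 hW =>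
            have hev := ety_var_of_fv he (by simp [Ty.delayC, Ty.bangT, Ty.head]) hfv
            subst hev
            have hvxs : v ∉ xs := fun hm => by rw [hxs v hm] at hT₀; cases hT₀
            have hΞ₁v : ((Γ.update y (.serv bs K Ts U)).extend xs Ts) v
                = some (.serv bs K₂ Sv X₀) := by
              rw [Ctx.extend_apply_notMem _ hvxs, Ctx.update_apply, if_neg hvy]
              exact hT₀
            have hΞ₁y : ((Γ.update y (.serv bs K Ts U)).extend xs Ts) y
                = some (.serv bs K Ts U) := by
              rw [Ctx.extend_apply_notMem _ haxs]; simp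
            have hm1 : MOK (φ ∪ bs.toFinset) Φ (.serv bs _ Ts (U.par X₀))
                (.serv bs K Ts U) (.serv bs K₂ Sv X₀) :=
              MOK.serv (tyEqL_conv (Weaker.refl Φ) hEq) (semEqI_phi k1) (semEqI_phi k2)
                (subU_refl _)
            have he1 : ETy (φ ∪ bs.toFinset) Φ (Ctx.only y (.serv bs _ Ts (U.par X₀)))
                (.var y) (.serv bs K₂ Sv X₀) :=
              he_of_sub y (sub_serv_of (tyEqL_conv (Weaker.refl Φ) hEq) (semEqI_phi k2)
                subU_par_dropL)
            have ihr := ih v y _ _ _ (.var y) hvy hΞ₁v hΞ₁y hm1 he1 (by simp [Expr.fv])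
            rw [← Ctx.extend_minus_comm hvxs, minus_update_comm hvy,
              Ctx.extend_update_comm haxs, update_update_same,
              ← Ctx.extend_update_comm haxs] at ihr
            have ihr' : PTy (φ ∪ bs.toFinset) Φ (Ctx.extend ((Γ.minus v).update y
                (.serv bs K Ts (U.par X₀))) xs Ts) (P.subst v (.var y)) K :=
              pty_cast ihr (ctxSub_extend (ctxSub_update (ctxSub_refl _)
                (sub_serv_of (tyEqL_refl _)
                  (semEqI_phi (semEqI_symm k1)) (subU_refl _))) xs Ts)
            have hres := PTy.iserv (Γ := Γ.minus v) (jc := jc)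
              (by simp [Ne.symm hvy, hΓa])
              (fun x hx => by by_cases h2 : x = v <;> simp [h2, hxs x hx])
              haxs hnodup hlen ihr'
            simp only [Proc.subst, substName, if_neg (Ne.symm hva), if_neg hvxs]
            refine pty_cast hres ?_
            intro x
            by_cases hxy : x = y
            · subst hxy
              simp [Ne.symm hvy]
              exact OptSub.some (sub_serv_of (tyEqL_refl _) (semEqI_phi k1)
                (SubU.trans hW (SubU.trans (subU_of_congr (UCongr.symm UCongr.bangPar))
                  (SubU.bangCtx subU_scope_inp))))
            · by_cases hxv : x = v
              · subst hxv; simp [hxy]; exact OptSub.none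
              · simp [hxy, hxv]; exact optSub_refl _
        · -- neither is the subject
          rw [Ctx.update_apply, if_neg hva, Ctx.tmap_apply, Ctx.tmap_apply,
            Option.map_map] at hv
          rw [Ctx.update_apply, if_neg hya, Ctx.tmap_apply, Ctx.tmap_apply,
            Option.map_map] at hy
          obtain ⟨T₀, hT₀, hTmap⟩ := Option.map_eq_some_iff.1 hv
          obtain ⟨S₀, hS₀, hSmap⟩ := Option.map_eq_some_iff.1 hy
          simp only [Function.comp_apply] at hTmap hSmap
          obtain ⟨R₀, hm0, hsub, hh0, hid0⟩ := mok_bangC hmok hSmap.symm hTmap.symm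
          have he0 := he_adapt hm0 he hfv hh0 hid0
          have hvxs : v ∉ xs := fun hm => by rw [hxs v hm] at hT₀; cases hT₀
          have hyxs : y ∉ xs := fun hm => by rw [hxs y hm] at hS₀; cases hS₀
          have ihr := ih v y T₀ S₀ R₀ e hvy
            (by rw [Ctx.extend_apply_notMem _ hvxs, Ctx.update_apply, if_neg hva]
                exact hT₀)
            (by rw [Ctx.extend_apply_notMem _ hyxs, Ctx.update_apply, if_neg hya]
                exact hS₀)
            (mok_conv (Weaker.refl Φ) hm0) (ety_conv (Weaker.refl Φ) he0) hfv
          rw [← Ctx.extend_minus_comm hvxs, minus_update_comm hva,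
            ← Ctx.extend_update_comm hyxs,
            update_update_comm (fun h => hya h.symm)] at ihr
          have hres := PTy.iserv (Γ := (Γ.minus v).update y R₀) (jc := jc)
            (by simp [Ne.symm hya, Ne.symm hva, hΓa])
            (fun x hx => by
              by_cases h1 : x = y
              · exact absurd (h1 ▸ hx) hyxs
              · by_cases h2 : x = v <;> simp [h1, h2, hxs x hx, hvy])
            haxs hnodup hlen ihr
          simp only [Proc.subst, substName, if_neg (Ne.symm hva), if_neg hvxs]
          refine pty_cast hres ?_
          intro x
          by_cases hxy : x = y
          · subst hxy
            simp [Ne.symm hvy, hya]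
            exact OptSub.some hsub
          · by_cases hxv : x = v
            · subst hxv; simp [hxy, hva]; exact OptSub.none
            · by_cases hxa : x = a
              · subst hxa; simp [hxy, hxv]; exact optSub_refl _
              · simp [hxy, hxv, hxa]; exact optSub_refl _
  | @och φ Φ Γ Γ' Θ a es Ts U V jc P K hΓa hΓ'a hlen hes hP hpar ih =>
      intro v y T S R e hvy hv hy hmok he hfv
      by_cases hva : v = a
      · -- v is the output subject
        subst hva
        rw [Ctx.update_apply, if_pos rfl] at hv
        injection hv with hv; subst hv
        rw [Ctx.update_apply, if_neg (Ne.symm hvy), Ctx.tmap_apply] at hy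
        obtain ⟨S₀, hS₀, hSmap⟩ := Option.map_eq_some_iff.1 hy
        rw [← hSmap] at hmok
        cases S₀ with
        | nat _ _ => cases hmok
        | serv _ _ _ _ => cases hmok
        | ch Ss Y =>
          cases hmok with | ch hEq hW =>
          have hev := ety_var_of_fv he (by simp [Ty.head]) hfv
          subst hev
          have hpy := hpar y; rw [hS₀] at hpy
          obtain ⟨S₁, S₂, hy1, hy2, htpS⟩ := optPar_some_inv hpy
          cases htpS with | ch =>
          rename_i Y₁ Y₂
          have hm1 : MOK φ Φ (.ch Ss (Y₁.par U)) (.ch Ss Y₁) (.ch Ts U) :=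
            MOK.ch hEq (subU_refl _)
          have he1 : ETy φ Φ (Ctx.only y (.ch Ss (Y₁.par U))) (.var y) (.ch Ts U) :=
            he_of_sub y (sub_ch_of hEq subU_par_dropL)
          have ihP := ih v y _ _ _ (.var y) hvy (by simp)
            (by rw [Ctx.update_apply, if_neg (Ne.symm hvy)]; exact hy1)
            hm1 he1 (by simp [Expr.fv])
          rw [minus_update_same] at ihP
          have ihP' : PTy φ Φ (((Γ.minus v).minus y).update y
              (.ch Ts (Y₁.par U))) (P.subst v (.var y)) K := by
            rw [update_minus_same]
            exact pty_cast ihP (ctxSub_update (ctxSub_refl _)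
              (sub_ch_of (tyEqL_symm hEq) (subU_refl _)))
          have hes' : ∀ p ∈ (es.map (fun e' => e'.subst v (.var y))).zip Ts,
              ETy φ Φ (((Γ'.minus v).minus y).update y
                (.ch Ts (Y₂.par V))) p.1 p.2 := by
            intro p hp'
            obtain ⟨q, hq, rfl⟩ := mem_zip_map_left _ _ _ _ hp'
            have hm2 : MOK φ Φ (.ch Ss (Y₂.par V)) (.ch Ss Y₂) (.ch Ts V) :=
              MOK.ch hEq (subU_refl _)
            have he2 : ETy φ Φ (Ctx.only y (.ch Ss (Y₂.par V))) (.var y) (.ch Ts V) :=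
              he_of_sub y (sub_ch_of hEq subU_par_dropL)
            have hq' := ety_subst_merge (hes q hq) v y _ _ _ (.var y) hvy (by simp)
              (by rw [Ctx.update_apply, if_neg (Ne.symm hvy)]; exact hy2)
              hm2 he2 (by simp [Expr.fv])
            rw [minus_update_same] at hq'
            rw [update_minus_same]
            exact ety_cast hq' (ctxSub_update (ctxSub_refl _)
              (sub_ch_of (tyEqL_symm hEq) (subU_refl _)))
          have hres := PTy.och (Γ := (Γ.minus v).minus y) (Γ' := (Γ'.minus v).minus y)
            (jc := jc) (by simp) (by simp) (by simpa using hlen) hes' ihP'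
            (ctxPar_minus (ctxPar_minus hpar v) y)
          simp only [Proc.subst, substName, if_pos rfl]
          refine pty_cast hres ?_
          intro x
          by_cases hxy : x = y
          · subst hxy
            simp [Ne.symm hvy]
            exact OptSub.some (sub_ch_of hEq (SubU.trans hW (SubU.trans subU_scope_out'
              (SubU.outCtx (subU_of_congr
                (UCongr.trans (UCongr.parCtxL UCongr.parComm) UCongr.shuffle))))))
          · by_cases hxv : x = v
            · subst hxv; simp [hxy]; exact OptSub.none
            · simp [hxy, hxv]; exact optSub_refl _
      · by_cases hya : y = a
        · -- y is the output subject
          subst hya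
          rw [Ctx.update_apply, if_pos rfl] at hy
          injection hy with hy; subst hy
          rw [Ctx.update_apply, if_neg hva, Ctx.tmap_apply] at hv
          obtain ⟨T₀, hT₀, hTmap⟩ := Option.map_eq_some_iff.1 hv
          rw [← hTmap] at hmok he
          cases T₀ with
          | nat _ _ => cases hmok
          | serv _ _ _ _ => cases hmok
          | ch Sv Z =>
            cases hmok with | ch hEq hW =>
            have hev := ety_var_of_fv he (by simp [Ty.delayC, Ty.head]) hfv
            subst hev
            have hpv := hpar v; rw [hT₀] at hpv
            obtain ⟨T₁, T₂, hv1, hv2, htpT⟩ := optPar_some_inv hpv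
            cases htpT with | ch =>
            rename_i U₁ U₂
            have hm1 : MOK φ Φ (.ch Ts (U.par U₁)) (.ch Ts U) (.ch Sv U₁) :=
              MOK.ch hEq (subU_refl _)
            have he1 : ETy φ Φ (Ctx.only y (.ch Ts (U.par U₁))) (.var y) (.ch Sv U₁) :=
              he_of_sub y (sub_ch_of hEq subU_par_dropL)
            have ihP := ih v y _ _ _ (.var y) hvy
              (by rw [Ctx.update_apply, if_neg hvy]; exact hv1) (by simp)
              hm1 he1 (by simp [Expr.fv])
            rw [minus_update_comm hvy, update_update_same] at ihP
            have hes' : ∀ p ∈ (es.map (fun e' => e'.subst v (.var y))).zip Ts,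
                ETy φ Φ ((Γ'.minus v).update y (.ch Ts (V.par U₂))) p.1 p.2 := by
              intro p hp'
              obtain ⟨q, hq, rfl⟩ := mem_zip_map_left _ _ _ _ hp'
              have hm2 : MOK φ Φ (.ch Ts (V.par U₂)) (.ch Ts V) (.ch Sv U₂) :=
                MOK.ch hEq (subU_refl _)
              have he2 : ETy φ Φ (Ctx.only y (.ch Ts (V.par U₂))) (.var y) (.ch Sv U₂) :=
                he_of_sub y (sub_ch_of hEq subU_par_dropL)
              have hq' := ety_subst_merge (hes q hq) v y _ _ _ (.var y) hvy
                (by rw [Ctx.update_apply, if_neg hvy]; exact hv2) (by simp)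
                hm2 he2 (by simp [Expr.fv])
              rwa [minus_update_comm hvy, update_update_same] at hq'
            have hres := PTy.och (Γ := Γ.minus v) (Γ' := Γ'.minus v) (jc := jc)
              (by simp [Ne.symm hvy, hΓa]) (by simp [Ne.symm hvy, hΓ'a])
              (by simpa using hlen) hes' ihP (ctxPar_minus hpar v)
            simp only [Proc.subst, substName, if_neg (Ne.symm hva)]
            refine pty_cast hres ?_
            intro x
            by_cases hxy : x = y
            · subst hxy
              simp [Ne.symm hvy]
              exact OptSub.some (sub_ch_of (tyEqL_refl _)
                (SubU.trans hW (SubU.trans subU_scope_out (SubU.outCtx (subU_of_congr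
                  (UCongr.trans (UCongr.parCtxR UCongr.parComm) UCongr.shuffle))))))
            · by_cases hxv : x = v
              · subst hxv; simp [hxy]; exact OptSub.none
              · simp [hxy, hxv]; exact optSub_refl _
        · -- neither is the subject
          rw [Ctx.update_apply, if_neg hva, Ctx.tmap_apply] at hv
          rw [Ctx.update_apply, if_neg hya, Ctx.tmap_apply] at hy
          obtain ⟨T₀, hT₀, hTmap⟩ := Option.map_eq_some_iff.1 hv
          obtain ⟨S₀, hS₀, hSmap⟩ := Option.map_eq_some_iff.1 hy
          have hpv := hpar v; rw [hT₀] at hpv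
          obtain ⟨T₁, T₂, hv1, hv2, htpT⟩ := optPar_some_inv hpv
          have hpy := hpar y; rw [hS₀] at hpy
          obtain ⟨S₁, S₂, hy1, hy2, htpS⟩ := optPar_some_inv hpy
          obtain ⟨R₁, R₂, R₀, hm1, hm2, htpR, hsub, hh1, hh2, hid⟩ :=
            mok_split_delayC hmok hSmap.symm hTmap.symm htpS htpT
          have he1 : ETy φ Φ (Ctx.only y R₁) e T₁ :=
            he_adapt hm1 he hfv hh1 (fun h => ⟨(hid h).1, (hid h).2.2.1⟩)
          have he2 : ETy φ Φ (Ctx.only y R₂) e T₂ :=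
            he_adapt hm2 he hfv hh2 (fun h => ⟨(hid h).2.1, (hid h).2.2.2⟩)
          have ihP := ih v y T₁ S₁ R₁ e hvy
            (by rw [Ctx.update_apply, if_neg hva]; exact hv1)
            (by rw [Ctx.update_apply, if_neg hya]; exact hy1) hm1 he1 hfv
          rw [minus_update_comm hva,
            update_update_comm (show a ≠ y from fun h => hya h.symm)] at ihP
          have hes' : ∀ p ∈ (es.map (fun e' => e'.subst v e)).zip Ts,
              ETy φ Φ ((((Γ'.minus v).update y R₂)).update a (.ch Ts V)) p.1 p.2 := by
            intro p hp'
            obtain ⟨q, hq, rfl⟩ := mem_zip_map_left _ _ _ _ hp'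
            have hq' := ety_subst_merge (hes q hq) v y T₂ S₂ R₂ e hvy
              (by rw [Ctx.update_apply, if_neg hva]; exact hv2)
              (by rw [Ctx.update_apply, if_neg hya]; exact hy2) hm2 he2 hfv
            rwa [minus_update_comm hva,
              update_update_comm (show a ≠ y from fun h => hya h.symm)] at hq'
          have hres := PTy.och (Γ := (Γ.minus v).update y R₁)
            (Γ' := (Γ'.minus v).update y R₂) (jc := jc)
            (by simp [Ne.symm hya, Ne.symm hva, hΓa])
            (by simp [Ne.symm hya, Ne.symm hva, hΓ'a])
            (by simpa using hlen) hes' ihP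
            (ctxPar_update (ctxPar_minus hpar v) htpR)
          simp only [Proc.subst, substName, if_neg (Ne.symm hva)]
          refine pty_cast hres ?_
          intro x
          by_cases hxy : x = y
          · subst hxy
            simp [Ne.symm hvy, hya]
            exact OptSub.some hsub
          · by_cases hxv : x = v
            · subst hxv; simp [hxy, hva]; exact OptSub.none
            · by_cases hxa : x = a
              · subst hxa; simp [hxy, hxv]; exact optSub_refl _
              · simp [hxy, hxv, hxa]; exact optSub_refl _
  | @oserv φ Φ Γ Γ' Θ a es bs Is Ts U V jc P K K' hΓa hΓ'a hlen hlenbs hes hP hpar ih =>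
      intro v y T S R e hvy hv hy hmok he hfv
      by_cases hva : v = a
      · -- v is the output subject
        subst hva
        rw [Ctx.update_apply, if_pos rfl] at hv
        injection hv with hv; subst hv
        rw [Ctx.update_apply, if_neg (Ne.symm hvy), Ctx.tmap_apply] at hy
        obtain ⟨S₀, hS₀, hSmap⟩ := Option.map_eq_some_iff.1 hy
        rw [← hSmap] at hmok
        cases S₀ with
        | nat _ _ => cases hmok
        | ch _ _ => cases hmok
        | serv bs' K₁ Ss Y =>
          cases hmok with | serv hEq k1 k2 hW =>
          have hev := ety_var_of_fv he (by simp [Ty.head]) hfv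
          subst hev
          have hpy := hpar y; rw [hS₀] at hpy
          obtain ⟨S₁, S₂, hy1, hy2, htpS⟩ := optPar_some_inv hpy
          cases htpS with | serv =>
          rename_i Y₁ Y₂
          have hm1 : MOK φ Φ (.serv bs _ Ss (Y₁.par U)) (.serv bs K₁ Ss Y₁)
              (.serv bs K Ts U) := MOK.serv hEq k1 k2 (subU_refl _)
          have he1 : ETy φ Φ (Ctx.only y (.serv bs _ Ss (Y₁.par U))) (.var y)
              (.serv bs K Ts U) := he_of_sub y (sub_serv_of hEq k2 subU_par_dropL)
          have ihP := ih v y _ _ _ (.var y) hvy (by simp)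
            (by rw [Ctx.update_apply, if_neg (Ne.symm hvy)]; exact hy1)
            hm1 he1 (by simp [Expr.fv])
          rw [minus_update_same] at ihP
          have ihP' : PTy φ Φ (((Γ.minus v).minus y).update y
              (.serv bs K Ts (Y₁.par U))) (P.subst v (.var y)) K' := by
            rw [update_minus_same]
            exact pty_cast ihP (ctxSub_update (ctxSub_refl _)
              (sub_serv_of (tyEqL_symm hEq) (semEqI_phi (semEqI_symm k2)) (subU_refl _)))
          have hes' : ∀ p ∈ ((es.map (fun e' => e'.subst v (.var y))).zip
              (Ts.map (fun T => T.misubst (bs.zip Is)))),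
              ETy φ Φ (((Γ'.minus v).minus y).update y
                (.serv bs K Ts (Y₂.par V))) p.1 p.2 := by
            intro p hp'
            obtain ⟨q, hq, rfl⟩ := mem_zip_map_left _ _ _ _ hp'
            have hm2 : MOK φ Φ (.serv bs _ Ss (Y₂.par V)) (.serv bs K₁ Ss Y₂)
                (.serv bs K Ts V) := MOK.serv hEq k1 k2 (subU_refl _)
            have he2 : ETy φ Φ (Ctx.only y (.serv bs _ Ss (Y₂.par V))) (.var y)
                (.serv bs K Ts V) := he_of_sub y (sub_serv_of hEq k2 subU_par_dropL)
            have hq' := ety_subst_merge (hes q hq) v y _ _ _ (.var y) hvy (by simp)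
              (by rw [Ctx.update_apply, if_neg (Ne.symm hvy)]; exact hy2)
              hm2 he2 (by simp [Expr.fv])
            rw [minus_update_same] at hq'
            rw [update_minus_same]
            exact ety_cast hq' (ctxSub_update (ctxSub_refl _)
              (sub_serv_of (tyEqL_symm hEq) (semEqI_phi (semEqI_symm k2)) (subU_refl _)))
          have hres := PTy.oserv (Γ := (Γ.minus v).minus y) (Γ' := (Γ'.minus v).minus y)
            (jc := jc) (Is := Is) (by simp) (by simp) (by simpa using hlen) hlenbs
            hes' ihP' (ctxPar_minus (ctxPar_minus hpar v) y)
          simp only [Proc.subst, substName, if_pos rfl]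
          refine pty_cast hres ?_
          intro x
          by_cases hxy : x = y
          · subst hxy
            simp [Ne.symm hvy]
            exact OptSub.some (sub_serv_of hEq (semEqI_phi k2)
              (SubU.trans hW (SubU.trans subU_scope_out'
                (SubU.outCtx (subU_of_congr
                  (UCongr.trans (UCongr.parCtxL UCongr.parComm) UCongr.shuffle))))))
          · by_cases hxv : x = v
            · subst hxv; simp [hxy]; exact OptSub.none
            · simp [hxy, hxv]; exact optSub_refl _
      · by_cases hya : y = a
        · -- y is the output subject
          subst hya
          rw [Ctx.update_apply, if_pos rfl] at hy
          injection hy with hy; subst hy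
          rw [Ctx.update_apply, if_neg hva, Ctx.tmap_apply] at hv
          obtain ⟨T₀, hT₀, hTmap⟩ := Option.map_eq_some_iff.1 hv
          rw [← hTmap] at hmok he
          cases T₀ with
          | nat _ _ => cases hmok
          | ch _ _ => cases hmok
          | serv bs' K₂ Sv Z =>
            cases hmok with | serv hEq k1 k2 hW =>
            have hev := ety_var_of_fv he (by simp [Ty.delayC, Ty.head]) hfv
            subst hev
            have hpv := hpar v; rw [hT₀] at hpv
            obtain ⟨T₁, T₂, hv1, hv2, htpT⟩ := optPar_some_inv hpv
            cases htpT with | serv =>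
            rename_i U₁ U₂
            have hm1 : MOK φ Φ (.serv bs _ Ts (U.par U₁)) (.serv bs K Ts U)
                (.serv bs K₂ Sv U₁) := MOK.serv hEq k1 k2 (subU_refl _)
            have he1 : ETy φ Φ (Ctx.only y (.serv bs _ Ts (U.par U₁))) (.var y)
                (.serv bs K₂ Sv U₁) := he_of_sub y (sub_serv_of hEq k2 subU_par_dropL)
            have ihP := ih v y _ _ _ (.var y) hvy
              (by rw [Ctx.update_apply, if_neg hvy]; exact hv1) (by simp)
              hm1 he1 (by simp [Expr.fv])
            rw [minus_update_comm hvy, update_update_same] at ihP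
            have ihP' : PTy φ Φ ((Γ.minus v).update y (.serv bs K Ts (U.par U₁)))
                (P.subst v (.var y)) K' :=
              pty_cast ihP (ctxSub_update (ctxSub_refl _)
                (sub_serv_of (tyEqL_refl _) (semEqI_phi (semEqI_symm k1)) (subU_refl _)))
            have hes' : ∀ p ∈ ((es.map (fun e' => e'.subst v (.var y))).zip
                (Ts.map (fun T => T.misubst (bs.zip Is)))),
                ETy φ Φ ((Γ'.minus v).update y (.serv bs K Ts (V.par U₂))) p.1 p.2 := by
              intro p hp'
              obtain ⟨q, hq, rfl⟩ := mem_zip_map_left _ _ _ _ hp'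
              have hm2 : MOK φ Φ (.serv bs _ Ts (V.par U₂)) (.serv bs K Ts V)
                  (.serv bs K₂ Sv U₂) := MOK.serv hEq k1 k2 (subU_refl _)
              have he2 : ETy φ Φ (Ctx.only y (.serv bs _ Ts (V.par U₂))) (.var y)
                  (.serv bs K₂ Sv U₂) := he_of_sub y (sub_serv_of hEq k2 subU_par_dropL)
              have hq' := ety_subst_merge (hes q hq) v y _ _ _ (.var y) hvy
                (by rw [Ctx.update_apply, if_neg hvy]; exact hv2) (by simp)
                hm2 he2 (by simp [Expr.fv])
              rw [minus_update_comm hvy, update_update_same] at hq'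
              exact ety_cast hq' (ctxSub_update (ctxSub_refl _)
                (sub_serv_of (tyEqL_refl _) (semEqI_phi (semEqI_symm k1)) (subU_refl _)))
            have hres := PTy.oserv (Γ := Γ.minus v) (Γ' := Γ'.minus v) (jc := jc)
              (Is := Is) (by simp [Ne.symm hvy, hΓa]) (by simp [Ne.symm hvy, hΓ'a])
              (by simpa using hlen) hlenbs hes' ihP' (ctxPar_minus hpar v)
            simp only [Proc.subst, substName, if_neg (Ne.symm hva)]
            refine pty_cast hres ?_
            intro x
            by_cases hxy : x = y
            · subst hxy
              simp [Ne.symm hvy]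
              exact OptSub.some (sub_serv_of (tyEqL_refl _) (semEqI_phi k1)
                (SubU.trans hW (SubU.trans subU_scope_out (SubU.outCtx (subU_of_congr
                  (UCongr.trans (UCongr.parCtxR UCongr.parComm) UCongr.shuffle))))))
            · by_cases hxv : x = v
              · subst hxv; simp [hxy]; exact OptSub.none
              · simp [hxy, hxv]; exact optSub_refl _
        · -- neither is the subject
          rw [Ctx.update_apply, if_neg hva, Ctx.tmap_apply] at hv
          rw [Ctx.update_apply, if_neg hya, Ctx.tmap_apply] at hy
          obtain ⟨T₀, hT₀, hTmap⟩ := Option.map_eq_some_iff.1 hv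
          obtain ⟨S₀, hS₀, hSmap⟩ := Option.map_eq_some_iff.1 hy
          have hpv := hpar v; rw [hT₀] at hpv
          obtain ⟨T₁, T₂, hv1, hv2, htpT⟩ := optPar_some_inv hpv
          have hpy := hpar y; rw [hS₀] at hpy
          obtain ⟨S₁, S₂, hy1, hy2, htpS⟩ := optPar_some_inv hpy
          obtain ⟨R₁, R₂, R₀, hm1, hm2, htpR, hsub, hh1, hh2, hid⟩ :=
            mok_split_delayC hmok hSmap.symm hTmap.symm htpS htpT
          have he1 : ETy φ Φ (Ctx.only y R₁) e T₁ :=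
            he_adapt hm1 he hfv hh1 (fun h => ⟨(hid h).1, (hid h).2.2.1⟩)
          have he2 : ETy φ Φ (Ctx.only y R₂) e T₂ :=
            he_adapt hm2 he hfv hh2 (fun h => ⟨(hid h).2.1, (hid h).2.2.2⟩)
          have ihP := ih v y T₁ S₁ R₁ e hvy
            (by rw [Ctx.update_apply, if_neg hva]; exact hv1)
            (by rw [Ctx.update_apply, if_neg hya]; exact hy1) hm1 he1 hfv
          rw [minus_update_comm hva,
            update_update_comm (show a ≠ y from fun h => hya h.symm)] at ihP
          have hes' : ∀ p ∈ ((es.map (fun e' => e'.subst v e)).zip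
              (Ts.map (fun T => T.misubst (bs.zip Is)))),
              ETy φ Φ ((((Γ'.minus v).update y R₂)).update a (.serv bs K Ts V))
                p.1 p.2 := by
            intro p hp'
            obtain ⟨q, hq, rfl⟩ := mem_zip_map_left _ _ _ _ hp'
            have hq' := ety_subst_merge (hes q hq) v y T₂ S₂ R₂ e hvy
              (by rw [Ctx.update_apply, if_neg hva]; exact hv2)
              (by rw [Ctx.update_apply, if_neg hya]; exact hy2) hm2 he2 hfv
            rwa [minus_update_comm hva,
              update_update_comm (show a ≠ y from fun h => hya h.symm)] at hq'
          have hres := PTy.oserv (Γ := (Γ.minus v).update y R₁)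
            (Γ' := (Γ'.minus v).update y R₂) (jc := jc) (Is := Is)
            (by simp [Ne.symm hya, Ne.symm hva, hΓa])
            (by simp [Ne.symm hya, Ne.symm hva, hΓ'a])
            (by simpa using hlen) hlenbs hes' ihP
            (ctxPar_update (ctxPar_minus hpar v) htpR)
          simp only [Proc.subst, substName, if_neg (Ne.symm hva)]
          refine pty_cast hres ?_
          intro x
          by_cases hxy : x = y
          · subst hxy
            simp [Ne.symm hvy, hya]
            exact OptSub.some hsub
          · by_cases hxv : x = v
            · subst hxv; simp [hxy, hva]; exact OptSub.none
            · by_cases hxa : x = a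
              · subst hxa; simp [hxy, hxv]; exact optSub_refl _
              · simp [hxy, hxv, hxa]; exact optSub_refl _
theorem optPar_none_left {o2 o3 : Option Ty} (h : OptPar none o2 o3) :
    o2 = none ∧ o3 = none := by cases h; exact ⟨rfl, rfl⟩

theorem optPar_some_mid {o1 o3 : Option Ty} {S : Ty} (h : OptPar o1 (some S) o3) :
    ∃ T1 T3, o1 = some T1 ∧ o3 = some T3 ∧ TyPar T1 S T3 := by
  cases h with | some hp => exact ⟨_, _, rfl, rfl, hp⟩

theorem typar_nat_mid {A C : Ty} {I J : Idx} (h : TyPar A (.nat I J) C) :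
    A = .nat I J ∧ C = .nat I J := by cases h; exact ⟨rfl, rfl⟩

theorem minus_of_none {Γ : Ctx} {v : Name} (h : Γ v = none) : Γ.minus v = Γ := by
  funext x
  by_cases hx : x = v
  · subst hx; simp [h]
  · simp [hx]
theorem optPar_some_left {T1 : Ty} {o2 o3 : Option Ty} (h : OptPar (some T1) o2 o3) :
    ∃ T2 T3, o2 = some T2 ∧ o3 = some T3 ∧ TyPar T1 T2 T3 := by
  cases h with | some hp => exact ⟨_, _, rfl, rfl, hp⟩

/-- Substitution for the usage type system: substituting an
expression `e` of type `T` (typed in `Δ`) for a variable `v : T` merges the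
contexts by parallel composition. -/
theorem substitution (φ : Finset IVar) (Φ : CSet) (Γ Δ Θ : Ctx)
    (hpar : CtxPar Γ Δ Θ) (v : Name) (T : Ty) (hv : Γ v = none)
    (e : Expr) (he : ETy φ Φ Δ e T) :
    (∀ e' T', ETy φ Φ (Γ.update v T) e' T' → ETy φ Φ Θ (e'.subst v e) T') ∧
    (∀ P K, PTy φ Φ (Γ.update v T) P K → PTy φ Φ Θ (P.subst v e) K) := by
  have hpv := hpar v; rw [hv] at hpv
  have hΔv : Δ v = none := (optPar_none_left hpv).1
  have hΘΓ : CtxSub φ Φ Θ Γ := by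
    intro x
    cases hx : Γ x with
    | none =>
        have := hpar x; rw [hx] at this
        rw [(optPar_none_left this).2]
        exact OptSub.none
    | some G =>
        have := hpar x; rw [hx] at this
        obtain ⟨T2, T3, h2, h3, hp⟩ := optPar_some_left this
        rw [h3]
        exact OptSub.some (typar_sub_L hp)
  rcases Finset.eq_empty_or_nonempty e.fv with hemp | ⟨y, hy⟩
  · -- `e` is closed
    have he0 := ety_restrict_empty he hemp
    constructor
    · intro e' T' h1
      have hr := ety_subst_closed h1 v T e (by simp) he0 hemp
      rw [minus_update_same, minus_of_none hv] at hr
      exact ety_cast hr hΘΓ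
    · intro P K h1
      have hr := pty_subst_closed h1 v T e (by simp) he0 hemp
      rw [minus_update_same, minus_of_none hv] at hr
      exact pty_cast hr hΘΓ
  · -- `e` has the free variable `y`
    obtain ⟨y0, hfv0⟩ := expr_fv_subsingleton e
    have hyy : y = y0 := Finset.mem_singleton.1 (hfv0 hy)
    rw [← hyy] at hfv0
    obtain ⟨Sy, hSy⟩ := ety_fv_some he y hy
    have hvy : v ≠ y := by
      intro hh; subst hh; rw [hΔv] at hSy; cases hSy
    have hpy := hpar y; rw [hSy] at hpy
    obtain ⟨SΓ, SΘ, hΓy, hΘy, htp⟩ := optPar_some_mid hpy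
    have He : ETy φ Φ (Ctx.only y SΘ) e T := by
      refine ety_cast (ety_restrict_single he y Sy hfv0 hSy) ?_
      intro x
      by_cases hx : x = y
      · subst hx; simp; exact OptSub.some (typar_sub_R htp)
      · simp [hx]; exact OptSub.none
    have hmok : MOK φ Φ SΘ SΓ T := by
      obtain ⟨S', hS', hor⟩ := ety_fv_nat_or_var he y hy
      rw [hSy] at hS'; injection hS' with hS'; subst hS'
      rcases hor with he' | hh0
      · subst he'
        obtain ⟨S'', hS'', hsub⟩ := ety_var_inv he
        rw [hSy] at hS''; injection hS'' with h; subst h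
        cases htp with
        | nat =>
            obtain ⟨I2, J2, rfl⟩ := head_zero_nat (by rw [← sub_head hsub]; rfl)
            exact MOK.nat (semLe_refl _) (semLe_refl _)
        | ch =>
            cases hsub with | ch len f g u =>
            exact MOK.ch ⟨len, f, g⟩ (subU_par_monoR u)
        | serv =>
            cases hsub with | serv len f g k u =>
            exact MOK.serv ⟨len, f, g⟩ (semEqI_refl _) (semEqI_phi k) (subU_par_monoR u)
      · have hT0 : T.head = 0 := by
          by_contra hhead
          obtain ⟨x, hex⟩ := ety_head_var he hhead
          subst hex
          have hx : y = x := by simpa [Expr.fv] using hy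
          subst hx
          obtain ⟨S'', hS'', hsub⟩ := ety_var_inv he
          rw [hSy] at hS''; injection hS'' with h; subst h
          exact hhead (by rw [← sub_head hsub]; exact hh0)
        obtain ⟨I, J, rfl⟩ := head_zero_nat hh0
        obtain ⟨I2, J2, rfl⟩ := head_zero_nat hT0
        obtain ⟨rfl, rfl⟩ := typar_nat_mid htp
        exact MOK.nat (semLe_refl _) (semLe_refl _)
    have hcast : CtxSub φ Φ Θ (Γ.update y SΘ) := by
      intro x
      by_cases hx : x = y
      · subst hx; simp; rw [hΘy]; exact OptSub.some (sub_refl _)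
      · simp [hx]
        cases hxG : Γ x with
        | none =>
            have := hpar x; rw [hxG] at this
            rw [(optPar_none_left this).2]
            exact OptSub.none
        | some G =>
            have := hpar x; rw [hxG] at this
            obtain ⟨T2, T3, h2, h3, hp⟩ := optPar_some_left this
            rw [h3]
            exact OptSub.some (typar_sub_L hp)
    constructor
    · intro e' T' h1
      have hr := ety_subst_merge h1 v y T SΓ SΘ e hvy (by simp)
        (by simp [Ne.symm hvy]; exact hΓy) hmok He hfv0
      rw [minus_update_same, minus_of_none hv] at hr
      exact ety_cast hr hcast
    · intro P K h1
      have hr := pty_subst_merge h1 v y T SΓ SΘ e hvy (by simp)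
        (by simp [Ne.symm hvy]; exact hΓy) hmok He hfv0
      rw [minus_update_same, minus_of_none hv] at hr
      exact pty_cast hr hcast

end PiSpan
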